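/- arXiv:1712.02158 — 4 statements merged into one kernel-verified Lean document; each statement's English description precedes it below -/
import Mathlib

section
/- Let A₁ ∈ ℝ^{n₁×n₁} and A₂ ∈ ℝ^{n₂×n₂} be Hurwitz, C₁ ∈ ℝ^{p×n₁}, C₂ ∈ ℝ^{p×n₂}, K₁ ∈ ℝ^{n₂×n₁}, K₂ ∈ ℝ^{n₁×n₂}. Then all the level-k observability Gramians Q₁^{(k)}, Q₂^{(k)} exist (the iterated integrals converge) and for every k ≥ 2 they satisfy the coupled Lyapunov recursions A₁ᵀ Q₁^{(k)} + Q₁^{(k)} A₁ + K₁ᵀ Q₂^{(k−1)} K₁ = 0 and A₂ᵀ Q₂^{(k)} + Q₂^{(k)} A₂ + K₂ᵀ Q₁^{(k−1)} K₂ = 0. -/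
open Matrix MeasureTheory

/-- A real square matrix is Hurwitz if all eigenvalues (over `ℂ`) have negative real part. -/
def IsHurwitz {n : ℕ} (A : Matrix (Fin n) (Fin n) ℝ) : Prop :=
  ∀ μ ∈ spectrum ℂ (A.map (algebraMap ℝ ℂ)), μ.re < 0

/-- The pair of level-`(k+1)` observability energy functionals for the two-mode switched
system: the first component is the functional for the alternating mode sequence *ending*
in mode 1, the second for the one ending in mode 2.  Here `K1 : ℝ^{n₂×n₁}` couples mode 1
to mode 2 and `K2 : ℝ^{n₁×n₂}` couples mode 2 to mode 1, and
`g^o(t_k,…,t₁) = C_{q_k} e^{A_{q_k}t_k} K_{q_k←q_{k−1}} ⋯ K_{q₂←q₁} e^{A_{q₁}t₁}`;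
the argument `t 0` is the *last* time variable `t₁`. -/
noncomputable def obsFun {n1 n2 p : ℕ}
    (A1 : Matrix (Fin n1) (Fin n1) ℝ) (A2 : Matrix (Fin n2) (Fin n2) ℝ)
    (C1 : Matrix (Fin p) (Fin n1) ℝ) (C2 : Matrix (Fin p) (Fin n2) ℝ)
    (K1 : Matrix (Fin n2) (Fin n1) ℝ) (K2 : Matrix (Fin n1) (Fin n2) ℝ) :
    (k : ℕ) → ((Fin (k + 1) → ℝ) → Matrix (Fin p) (Fin n1) ℝ) ×
      ((Fin (k + 1) → ℝ) → Matrix (Fin p) (Fin n2) ℝ)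
  | 0 => (fun t => C1 * NormedSpace.exp (t 0 • A1),
          fun t => C2 * NormedSpace.exp (t 0 • A2))
  | k + 1 =>
      (fun t => (obsFun A1 A2 C1 C2 K1 K2 k).2 (fun i => t i.succ) * K1 *
        NormedSpace.exp (t 0 • A1),
       fun t => (obsFun A1 A2 C1 C2 K1 K2 k).1 (fun i => t i.succ) * K2 *
        NormedSpace.exp (t 0 • A2))

/-- The level-`(k+1)` observability Gramian of mode 1, defined entrywise as the iterated
integral of `(g^o)ᵀ g^o` over `[0,∞)^{k+1}`. -/
noncomputable def obsGram1 {n1 n2 p : ℕ}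
    (A1 : Matrix (Fin n1) (Fin n1) ℝ) (A2 : Matrix (Fin n2) (Fin n2) ℝ)
    (C1 : Matrix (Fin p) (Fin n1) ℝ) (C2 : Matrix (Fin p) (Fin n2) ℝ)
    (K1 : Matrix (Fin n2) (Fin n1) ℝ) (K2 : Matrix (Fin n1) (Fin n2) ℝ) (k : ℕ) :
    Matrix (Fin n1) (Fin n1) ℝ :=
  Matrix.of fun i j =>
    ∫ t in Set.univ.pi (fun _ : Fin (k + 1) => Set.Ioi (0:ℝ)),
      (((obsFun A1 A2 C1 C2 K1 K2 k).1 t)ᵀ * (obsFun A1 A2 C1 C2 K1 K2 k).1 t) i j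

/-- The level-`(k+1)` observability Gramian of mode 2. -/
noncomputable def obsGram2 {n1 n2 p : ℕ}
    (A1 : Matrix (Fin n1) (Fin n1) ℝ) (A2 : Matrix (Fin n2) (Fin n2) ℝ)
    (C1 : Matrix (Fin p) (Fin n1) ℝ) (C2 : Matrix (Fin p) (Fin n2) ℝ)
    (K1 : Matrix (Fin n2) (Fin n1) ℝ) (K2 : Matrix (Fin n1) (Fin n2) ℝ) (k : ℕ) :
    Matrix (Fin n2) (Fin n2) ℝ :=
  Matrix.of fun i j =>
    ∫ t in Set.univ.pi (fun _ : Fin (k + 1) => Set.Ioi (0:ℝ)),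
      (((obsFun A1 A2 C1 C2 K1 K2 k).2 t)ᵀ * (obsFun A1 A2 C1 C2 K1 K2 k).2 t) i j


attribute [local instance] Matrix.linftyOpNormedRing Matrix.linftyOpNormedAlgebra
  Matrix.instCompleteSpace

variable {n : ℕ}

lemma exp_mulVec_eig (A : Matrix (Fin n) (Fin n) ℂ) (v : Fin n → ℂ) (μ : ℂ)
    (hv : A *ᵥ v = μ • v) :
    NormedSpace.exp A *ᵥ v = Complex.exp μ • v := by
  have hpow : ∀ k : ℕ, (A ^ k) *ᵥ v = (μ ^ k) • v := by
    intro k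
    induction k with
    | zero => simp
    | succ k ih =>
      rw [pow_succ, ← Matrix.mulVec_mulVec, hv, Matrix.mulVec_smul, ih, smul_smul, pow_succ]
      ring_nf
  let l : Matrix (Fin n) (Fin n) ℂ →ₗ[ℂ] (Fin n → ℂ) :=
    { toFun := fun M => M *ᵥ v
      map_add' := fun M N => Matrix.add_mulVec M N v
      map_smul' := fun c M => Matrix.smul_mulVec c M v }
  have hl : Continuous l := l.continuous_of_finiteDimensional
  have h1 : NormedSpace.exp A *ᵥ v = l (∑' k : ℕ, (k.factorial : ℂ)⁻¹ • A ^ k) := by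
    rw [NormedSpace.exp_eq_tsum ℂ]; rfl
  rw [h1]
  have h2 : l (∑' k : ℕ, (k.factorial : ℂ)⁻¹ • A ^ k)
      = ∑' k : ℕ, l ((k.factorial : ℂ)⁻¹ • A ^ k) := by
    exact ((NormedSpace.expSeries_summable' (𝕂 := ℂ) A).hasSum.map l hl).tsum_eq.symm
  rw [h2]
  have h3 : ∀ k : ℕ, l ((k.factorial : ℂ)⁻¹ • A ^ k) = ((k.factorial : ℂ)⁻¹ * μ ^ k) • v := by
    intro k
    rw [_root_.map_smul]
    show (k.factorial : ℂ)⁻¹ • ((A ^ k) *ᵥ v) = _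
    rw [hpow k, smul_smul]
  simp_rw [h3]
  rw [Summable.tsum_smul_const]
  · congr 1
    rw [Complex.exp_eq_exp_ℂ, NormedSpace.exp_eq_tsum ℂ]
    simp [smul_eq_mul]
  · have := NormedSpace.expSeries_summable' (𝕂 := ℂ) (μ : ℂ)
    simpa [smul_eq_mul] using this

lemma mem_spectrum_iff_eig (M : Matrix (Fin n) (Fin n) ℂ) (lam : ℂ) :
    lam ∈ spectrum ℂ M ↔ ∃ v : Fin n → ℂ, v ≠ 0 ∧ M *ᵥ v = lam • v := by
  rw [spectrum.mem_iff]
  have h1 : (algebraMap ℂ (Matrix (Fin n) (Fin n) ℂ)) lam - M = lam • 1 - M := by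
    rw [Algebra.algebraMap_eq_smul_one]
  rw [h1, Matrix.isUnit_iff_isUnit_det, isUnit_iff_ne_zero, not_not,
    ← Matrix.exists_mulVec_eq_zero_iff]
  constructor
  · rintro ⟨v, hv, h⟩
    refine ⟨v, hv, ?_⟩
    rw [Matrix.sub_mulVec, Matrix.smul_mulVec, Matrix.one_mulVec, sub_eq_zero] at h
    exact h.symm
  · rintro ⟨v, hv, h⟩
    refine ⟨v, hv, ?_⟩
    rw [Matrix.sub_mulVec, Matrix.smul_mulVec, Matrix.one_mulVec, sub_eq_zero, h]

lemma spectrum_exp_subset (A : Matrix (Fin n) (Fin n) ℂ) :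
    ∀ lam ∈ spectrum ℂ (NormedSpace.exp A), ∃ μ ∈ spectrum ℂ A, lam = Complex.exp μ := by
  intro lam hlam
  rw [mem_spectrum_iff_eig] at hlam
  obtain ⟨v, hv0, hv⟩ := hlam
  -- the eigenspace of exp A for lam, as a submodule
  set E : Submodule ℂ (Fin n → ℂ) :=
    LinearMap.ker (Matrix.mulVecLin (NormedSpace.exp A - lam • 1)) with hE
  have hmemE : ∀ w, w ∈ E ↔ NormedSpace.exp A *ᵥ w = lam • w := by
    intro w
    simp only [hE, LinearMap.mem_ker, Matrix.mulVecLin_apply, Matrix.sub_mulVec,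
      Matrix.smul_mulVec, Matrix.one_mulVec, sub_eq_zero]
  have hvE : v ∈ E := (hmemE v).mpr hv
  have hinv : ∀ w ∈ E, Matrix.mulVecLin A w ∈ E := by
    intro w hw
    rw [hmemE] at hw ⊢
    rw [Matrix.mulVecLin_apply, Matrix.mulVec_mulVec]
    have hcomm : NormedSpace.exp A * A = A * NormedSpace.exp A :=
      ((Commute.refl A).exp_right).symm.eq
    rw [hcomm, ← Matrix.mulVec_mulVec, hw, Matrix.mulVec_smul]
  have : Nontrivial E := by
    refine nontrivial_of_ne ⟨v, hvE⟩ 0 ?_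
    simp [Subtype.ext_iff, hv0]
  obtain ⟨μ, hμ⟩ := Module.End.exists_eigenvalue ((Matrix.mulVecLin A).restrict hinv)
  obtain ⟨w, hw⟩ := hμ.exists_hasEigenvector
  have hw0 : w ≠ 0 := hw.right
  have hweig : A *ᵥ (w : Fin n → ℂ) = μ • (w : Fin n → ℂ) := by
    have h := congrArg (Subtype.val) hw.apply_eq_smul
    rw [LinearMap.restrict_coe_apply, Matrix.mulVecLin_apply] at h
    exact h.trans rfl
  have hw0' : (w : Fin n → ℂ) ≠ 0 := fun h => hw0 (Subtype.ext h)
  refine ⟨μ, ?_, ?_⟩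
  · exact (mem_spectrum_iff_eig A μ).mpr ⟨w, hw0', hweig⟩
  · have h1 : NormedSpace.exp A *ᵥ (w : Fin n → ℂ) = Complex.exp μ • (w : Fin n → ℂ) :=
      exp_mulVec_eig A w μ hweig
    have h2 : NormedSpace.exp A *ᵥ (w : Fin n → ℂ) = lam • (w : Fin n → ℂ) :=
      (hmemE _).mp (SetLike.coe_mem w)
    have := h1.symm.trans h2
    have hsub : (lam - Complex.exp μ) • (w : Fin n → ℂ) = 0 := by
      rw [sub_smul, this, sub_self]
    rcases smul_eq_zero.mp hsub with h | h
    · exact (sub_eq_zero.mp h)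
    · exact absurd h hw0'

lemma entry_le_linfty {n' : ℕ} (M : Matrix (Fin n') (Fin n') ℂ) (i : Fin n') (j : Fin n') :
    ‖M i j‖ ≤ ‖M‖ := by
  have h : ‖M i j‖₊ ≤ ‖M‖₊ := by
    rw [Matrix.linfty_opNNNorm_def]
    calc ‖M i j‖₊ ≤ ∑ j' : Fin n', ‖M i j'‖₊ :=
          Finset.single_le_sum (f := fun j' => ‖M i j'‖₊) (fun _ _ => zero_le)
            (Finset.mem_univ j)
      _ ≤ _ := Finset.le_sup (f := fun i => ∑ j' : Fin n', ‖M i j'‖₊) (Finset.mem_univ i)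
  exact_mod_cast h

lemma hurwitz_entry_decay (A : Matrix (Fin n) (Fin n) ℝ) (hA : IsHurwitz A) :
    ∃ c ε : ℝ, 0 < c ∧ 0 < ε ∧ ∀ t : ℝ, 0 ≤ t → ∀ i j,
      |NormedSpace.exp (t • A) i j| ≤ c * Real.exp (-(ε * t)) := by
  set A' : Matrix (Fin n) (Fin n) ℂ := A.map (algebraMap ℝ ℂ) with hA'
  set B : Matrix (Fin n) (Fin n) ℂ := NormedSpace.exp A' with hB
  obtain ⟨ρ, hρ0, hρ1, hρ⟩ : ∃ ρ : ℝ, 0 < ρ ∧ ρ < 1 ∧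
      ∀ lam ∈ spectrum ℂ B, ‖lam‖ ≤ ρ := by
    have hfin : (spectrum ℂ A').Finite := Matrix.finite_spectrum A'
    by_cases hne : (spectrum ℂ A').Nonempty
    · set s : Finset ℝ := hfin.toFinset.image (fun μ : ℂ => μ.re) with hs_def
      have hs : s.Nonempty := by
        obtain ⟨μ, hμ⟩ := hne
        exact ⟨μ.re, Finset.mem_image_of_mem _ (hfin.mem_toFinset.mpr hμ)⟩
      set α := s.max' hs with hα_def
      have hα : α < 0 := by
        obtain ⟨μ, hμmem, hμeq⟩ := Finset.mem_image.mp (s.max'_mem hs)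
        rw [hα_def, ← hμeq]
        exact hA μ (hfin.mem_toFinset.mp hμmem)
      refine ⟨Real.exp α, Real.exp_pos α, by
        rw [← Real.exp_zero]; exact Real.exp_lt_exp.mpr hα, ?_⟩
      intro lam hlam
      obtain ⟨μ, hμ, rfl⟩ := spectrum_exp_subset A' lam hlam
      rw [Complex.norm_exp]
      exact Real.exp_le_exp.mpr (s.le_max' _ (Finset.mem_image_of_mem _
        (hfin.mem_toFinset.mpr hμ)))
    · refine ⟨1/2, by norm_num, by norm_num, ?_⟩
      intro lam hlam
      obtain ⟨μ, hμ, _⟩ := spectrum_exp_subset A' lam hlam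
      exact absurd ⟨μ, hμ⟩ hne
  have hsr : spectralRadius ℂ B ≤ ENNReal.ofReal ρ := by
    rw [spectralRadius]
    refine iSup₂_le fun k hk => ?_
    rw [← ENNReal.ofReal_coe_nnreal, coe_nnnorm]
    exact ENNReal.ofReal_le_ofReal (hρ k hk)
  set ρ' : ℝ := (1 + ρ) / 2 with hρ'_def
  have hρ'0 : 0 < ρ' := by positivity
  have hρρ' : ρ < ρ' := by rw [hρ'_def]; linarith
  have hρ'1 : ρ' < 1 := by rw [hρ'_def]; linarith
  -- Gelfand: eventually ‖B^m‖ ≤ ρ'^m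
  have hN : ∃ N : ℕ, ∀ m, N ≤ m → ‖B ^ m‖ ≤ ρ' ^ m := by
    have hgel := spectrum.pow_nnnorm_pow_one_div_tendsto_nhds_spectralRadius B
    have hlt : spectralRadius ℂ B < ENNReal.ofReal ρ' :=
      lt_of_le_of_lt hsr (ENNReal.ofReal_lt_ofReal_iff (by positivity) |>.mpr hρρ')
    have hev : ∀ᶠ m : ℕ in Filter.atTop,
        (‖B ^ m‖₊ : ENNReal) ^ (1 / (m:ℝ)) < ENNReal.ofReal ρ' :=
      hgel.eventually_lt_const hlt
    obtain ⟨N, hNev⟩ := Filter.eventually_atTop.mp hev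
    refine ⟨max N 1, fun m hm => ?_⟩
    have hm1 : 1 ≤ m := le_trans (le_max_right N 1) hm
    have hmN : N ≤ m := le_trans (le_max_left N 1) hm
    have h := hNev m hmN
    have hm0 : (m : ℝ) ≠ 0 := by positivity
    have h2 : (‖B ^ m‖₊ : ENNReal) ≤ (ENNReal.ofReal ρ') ^ (m : ℕ) := by
      have hpow := ENNReal.rpow_le_rpow h.le (by positivity : (0:ℝ) ≤ (m:ℝ))
      rw [← ENNReal.rpow_mul, one_div, inv_mul_cancel₀ hm0, ENNReal.rpow_one] at hpow
      rw [← ENNReal.rpow_natCast (ENNReal.ofReal ρ') m]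
      exact hpow
    rw [← ENNReal.ofReal_pow hρ'0.le, ← ENNReal.ofReal_coe_nnreal, coe_nnnorm] at h2
    exact (ENNReal.ofReal_le_ofReal_iff (by positivity)).mp h2
  obtain ⟨N, hN⟩ := hN
  set c₁ : ℝ := 1 + ∑ k ∈ Finset.range N, ‖B ^ k‖ / ρ' ^ k with hc₁_def
  have hsum_nonneg : 0 ≤ ∑ k ∈ Finset.range N, ‖B ^ k‖ / ρ' ^ k :=
    Finset.sum_nonneg fun k _ => by positivity
  have hc₁1 : 1 ≤ c₁ := by rw [hc₁_def]; linarith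
  have hc₁0 : 0 < c₁ := lt_of_lt_of_le one_pos hc₁1
  have hBm : ∀ m : ℕ, ‖B ^ m‖ ≤ c₁ * ρ' ^ m := by
    intro m
    by_cases hm : N ≤ m
    · calc ‖B ^ m‖ ≤ ρ' ^ m := hN m hm
        _ = 1 * ρ' ^ m := (one_mul _).symm
        _ ≤ c₁ * ρ' ^ m := by
            apply mul_le_mul_of_nonneg_right hc₁1 (by positivity)
    · push_neg at hm
      have h1 : ‖B ^ m‖ / ρ' ^ m ≤ ∑ k ∈ Finset.range N, ‖B ^ k‖ / ρ' ^ k :=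
        Finset.single_le_sum (f := fun k => ‖B ^ k‖ / ρ' ^ k)
          (fun k _ => by positivity) (Finset.mem_range.mpr hm)
      have h2 : ‖B ^ m‖ / ρ' ^ m ≤ c₁ := by rw [hc₁_def]; linarith
      calc ‖B ^ m‖ = (‖B ^ m‖ / ρ' ^ m) * ρ' ^ m := by field_simp
        _ ≤ c₁ * ρ' ^ m := mul_le_mul_of_nonneg_right h2 (by positivity)
  -- bound on [0,1]
  have hcontf : Continuous fun s : ℝ => NormedSpace.exp (s • A') :=
    (NormedSpace.exp_continuous (𝔸 := Matrix (Fin n) (Fin n) ℂ)).comp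
      (continuous_id.smul continuous_const)
  obtain ⟨c₀, hc₀⟩ := (isCompact_Icc (a := (0:ℝ)) (b := 1)).exists_bound_of_continuousOn
    hcontf.continuousOn
  set c₂ : ℝ := max c₀ 1 with hc₂_def
  have hc₂0 : 0 < c₂ := lt_of_lt_of_le one_pos (le_max_right _ _)
  set ε : ℝ := -Real.log ρ' with hε_def
  have hε0 : 0 < ε := by
    rw [hε_def, neg_pos]
    exact Real.log_neg hρ'0 hρ'1
  refine ⟨c₂ * c₁ / ρ', ε, by positivity, hε0, ?_⟩
  intro t ht i j
  -- complexify
  have hmap : (NormedSpace.exp (t • A)).map (algebraMap ℝ ℂ)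
      = NormedSpace.exp (t • A') := by
    have hcont : Continuous (Complex.ofRealHom.mapMatrix :
        Matrix (Fin n) (Fin n) ℝ →+* Matrix (Fin n) (Fin n) ℂ) := by
      simp only [RingHom.mapMatrix]
      exact Continuous.matrix_map continuous_id Complex.continuous_ofReal
    have h := NormedSpace.map_exp
      (Complex.ofRealHom.mapMatrix : Matrix (Fin n) (Fin n) ℝ →+* Matrix (Fin n) (Fin n) ℂ)
      hcont (t • A)
    have h2 : (Complex.ofRealHom.mapMatrix : Matrix (Fin n) (Fin n) ℝ →+* _) (t • A)
        = t • A' := by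
      simp only [RingHom.mapMatrix_apply, hA']
      ext i' j'
      simp [Matrix.map_apply, Complex.real_smul]
    rw [h2] at h
    exact h
  have hentry : |NormedSpace.exp (t • A) i j| = ‖(NormedSpace.exp (t • A')) i j‖ := by
    rw [← hmap]
    simp only [Matrix.map_apply]
    exact (Complex.norm_real _).symm
  rw [hentry]
  -- decompose t = s + m
  set m : ℕ := ⌊t⌋₊ with hm_def
  set s : ℝ := t - m with hs_def
  have hs0 : 0 ≤ s := by
    rw [hs_def]
    have := Nat.floor_le ht
    linarith
  have hs1 : s ≤ 1 := by
    rw [hs_def]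
    have := (Nat.lt_floor_add_one t).le
    linarith
  have hsplit : NormedSpace.exp (t • A') = NormedSpace.exp (s • A') * B ^ m := by
    have ht' : t • A' = s • A' + (m : ℝ) • A' := by
      rw [← add_smul]
      congr 1
      rw [hs_def]; ring
    rw [ht', Matrix.exp_add_of_commute _ _ (((Commute.refl A').smul_left s).smul_right (m:ℝ))]
    congr 1
    rw [hB, show ((m:ℝ) • A') = (m • A' : Matrix (Fin n) (Fin n) ℂ) from
      Nat.cast_smul_eq_nsmul ℝ m A', Matrix.exp_nsmul]
  calc ‖(NormedSpace.exp (t • A')) i j‖ ≤ ‖NormedSpace.exp (t • A')‖ :=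
        entry_le_linfty _ i j
    _ = ‖NormedSpace.exp (s • A') * B ^ m‖ := by rw [hsplit]
    _ ≤ ‖NormedSpace.exp (s • A')‖ * ‖B ^ m‖ := norm_mul_le _ _
    _ ≤ c₂ * (c₁ * ρ' ^ m) := by
        apply mul_le_mul
        · exact le_trans (hc₀ _ ⟨hs0, hs1⟩) (le_max_left _ _)
        · exact hBm m
        · positivity
        · exact hc₂0.le
    _ ≤ c₂ * c₁ / ρ' * Real.exp (-(ε * t)) := by
        have key : ρ' ^ m ≤ Real.exp (-(ε * t)) / ρ' := by
          have h1 : (ρ':ℝ) ^ m = Real.exp ((m:ℝ) * Real.log ρ') := by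
            rw [Real.exp_nat_mul, Real.exp_log hρ'0]
          have h2 : Real.exp ((t - 1) * Real.log ρ') * ρ' = Real.exp (-(ε * t)) := by
            have hadd := (Real.exp_add ((t - 1) * Real.log ρ') (Real.log ρ')).symm
            rw [Real.exp_log hρ'0] at hadd
            rw [hadd]
            congr 1
            rw [hε_def]
            ring
          have hm_ge : t - 1 ≤ (m:ℝ) := by
            have := (Nat.lt_floor_add_one t).le
            rw [hm_def]; linarith
          have hlog : Real.log ρ' < 0 := Real.log_neg hρ'0 hρ'1
          calc (ρ':ℝ) ^ m = Real.exp ((m:ℝ) * Real.log ρ') := h1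
            _ ≤ Real.exp ((t - 1) * Real.log ρ') := by
                apply Real.exp_le_exp.mpr
                nlinarith
            _ = Real.exp (-(ε * t)) / ρ' := by
                rw [eq_div_iff (ne_of_gt hρ'0), h2]
        calc c₂ * (c₁ * ρ' ^ m) ≤ c₂ * (c₁ * (Real.exp (-(ε * t)) / ρ')) := by
              apply mul_le_mul_of_nonneg_left _ hc₂0.le
              exact mul_le_mul_of_nonneg_left key hc₁0.le
          _ = c₂ * c₁ / ρ' * Real.exp (-(ε * t)) := by ring

section Lyap
variable {n : ℕ}

/-- The integrand of the Lyapunov integral. -/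
noncomputable def lyapF (A M : Matrix (Fin n) (Fin n) ℝ) (t : ℝ) : Matrix (Fin n) (Fin n) ℝ :=
  NormedSpace.exp (t • Aᵀ) * M * NormedSpace.exp (t • A)

lemma lyapF_eq (A M : Matrix (Fin n) (Fin n) ℝ) (t : ℝ) :
    lyapF A M t = (NormedSpace.exp (t • A))ᵀ * M * NormedSpace.exp (t • A) := by
  rw [lyapF, show t • Aᵀ = (t • A)ᵀ from (Matrix.transpose_smul t A).symm,
    Matrix.exp_transpose]

lemma lyapF_entry (A M : Matrix (Fin n) (Fin n) ℝ) (t : ℝ) (i j : Fin n) :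
    lyapF A M t i j = ∑ b : Fin n, ∑ a : Fin n,
      NormedSpace.exp (t • A) a i * M a b * NormedSpace.exp (t • A) b j := by
  rw [lyapF_eq]
  simp only [Matrix.mul_apply, Matrix.transpose_apply, Finset.sum_mul]

lemma lyapF_bound (A M : Matrix (Fin n) (Fin n) ℝ) {c ε : ℝ} (hc : 0 < c)
    (hdec : ∀ t : ℝ, 0 ≤ t → ∀ i j, |NormedSpace.exp (t • A) i j| ≤ c * Real.exp (-(ε * t)))
    {t : ℝ} (ht : 0 ≤ t) (i j : Fin n) :
    |lyapF A M t i j| ≤ (∑ a : Fin n, ∑ b : Fin n, |M a b|) * (c ^ 2 * Real.exp (-(2 * ε * t))) := by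
  set e := Real.exp (-(ε * t)) with he_def
  have he : 0 < e := Real.exp_pos _
  have hexp : ∀ a b, |NormedSpace.exp (t • A) a b| ≤ c * e := fun a b => hdec t ht a b
  have hK : (c * e) ^ 2 = c ^ 2 * Real.exp (-(2 * ε * t)) := by
    have : e ^ 2 = Real.exp (-(2 * ε * t)) := by
      rw [he_def, sq, ← Real.exp_add]
      congr 1; ring
    rw [mul_pow, this]
  rw [lyapF_entry]
  calc |∑ b : Fin n, ∑ a : Fin n, NormedSpace.exp (t • A) a i * M a b
        * NormedSpace.exp (t • A) b j|
      ≤ ∑ b : Fin n, ∑ a : Fin n, |NormedSpace.exp (t • A) a i * M a b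
        * NormedSpace.exp (t • A) b j| := by
        refine le_trans (Finset.abs_sum_le_sum_abs _ _) ?_
        exact Finset.sum_le_sum fun b _ => Finset.abs_sum_le_sum_abs _ _
    _ ≤ ∑ b : Fin n, ∑ a : Fin n, |M a b| * (c * e) ^ 2 := by
        refine Finset.sum_le_sum fun b _ => Finset.sum_le_sum fun a _ => ?_
        rw [abs_mul, abs_mul]
        have h1 := hexp a i
        have h2 := hexp b j
        have h3 : (0:ℝ) ≤ |M a b| := abs_nonneg _
        have h4 : |NormedSpace.exp (t • A) a i| * |NormedSpace.exp (t • A) b j|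
            ≤ (c * e) * (c * e) :=
          mul_le_mul h1 h2 (abs_nonneg _) ((abs_nonneg _).trans h1)
        have h5 := mul_le_mul_of_nonneg_left h4 h3
        calc |NormedSpace.exp (t • A) a i| * |M a b| * |NormedSpace.exp (t • A) b j|
            = |M a b| * (|NormedSpace.exp (t • A) a i| * |NormedSpace.exp (t • A) b j|) := by
              ring
          _ ≤ |M a b| * ((c * e) * (c * e)) := h5
          _ = |M a b| * (c * e) ^ 2 := by ring
    _ = (∑ a : Fin n, ∑ b : Fin n, |M a b|) * (c ^ 2 * Real.exp (-(2 * ε * t))) := by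
        rw [← hK, Finset.sum_comm]
        rw [Finset.sum_mul]
        congr 1; ext a
        rw [Finset.sum_mul]

lemma lyapF_continuous (A M : Matrix (Fin n) (Fin n) ℝ) (i j : Fin n) :
    Continuous fun t : ℝ => lyapF A M t i j := by
  have h1 : Continuous fun t : ℝ => lyapF A M t := by
    apply Continuous.mul
    apply Continuous.mul
    · exact (NormedSpace.exp_continuous
        (𝔸 := Matrix (Fin n) (Fin n) ℝ)).comp (continuous_id.smul continuous_const)
    · exact continuous_const
    · exact (NormedSpace.exp_continuous
        (𝔸 := Matrix (Fin n) (Fin n) ℝ)).comp (continuous_id.smul continuous_const)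
  exact ((continuous_apply j).comp (continuous_apply i)).comp h1

lemma lyapF_integrable (A : Matrix (Fin n) (Fin n) ℝ) (hA : IsHurwitz A)
    (M : Matrix (Fin n) (Fin n) ℝ) (i j : Fin n) :
    IntegrableOn (fun t : ℝ => lyapF A M t i j) (Set.Ioi (0:ℝ)) := by
  obtain ⟨c, ε, hc, hε, hdec⟩ := hurwitz_entry_decay A hA
  have hint : IntegrableOn
      (fun t : ℝ => (∑ a : Fin n, ∑ b : Fin n, |M a b|) * (c ^ 2 * Real.exp (-(2 * ε) * t)))
      (Set.Ioi (0:ℝ)) :=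
    ((exp_neg_integrableOn_Ioi 0 (by positivity : (0:ℝ) < 2 * ε)).const_mul _).const_mul _
  refine Integrable.mono' hint ?_ ?_
  · exact ((lyapF_continuous A M i j).aestronglyMeasurable).restrict
  · filter_upwards [MeasureTheory.ae_restrict_mem measurableSet_Ioi] with t ht
    have ht' : (0:ℝ) ≤ t := (Set.mem_Ioi.mp ht).le
    have := lyapF_bound A M hc hdec ht' i j
    rw [Real.norm_eq_abs]
    calc |lyapF A M t i j|
        ≤ (∑ a : Fin n, ∑ b : Fin n, |M a b|) * (c ^ 2 * Real.exp (-(2 * ε * t))) := this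
      _ = (∑ a : Fin n, ∑ b : Fin n, |M a b|) * (c ^ 2 * Real.exp (-(2 * ε) * t)) := by
          ring_nf
  
lemma lyapF_hasDerivAt (A M : Matrix (Fin n) (Fin n) ℝ) (t : ℝ) :
    HasDerivAt (fun s : ℝ => lyapF A M s) (Aᵀ * lyapF A M t + lyapF A M t * A) t := by
  have h1 : HasDerivAt (fun s : ℝ => NormedSpace.exp (s • Aᵀ))
      (Aᵀ * NormedSpace.exp (t • Aᵀ)) t := hasDerivAt_exp_smul_const' Aᵀ t
  have h2 : HasDerivAt (fun s : ℝ => NormedSpace.exp (s • A))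
      (NormedSpace.exp (t • A) * A) t := hasDerivAt_exp_smul_const A t
  have h3 := (h1.mul_const M).mul h2
  convert h3 using 1
  · rfl
  · rfl
  · rfl
  · rfl
  simp only [lyapF]
  noncomm_ring

lemma lyapF_mulleft_integrable (A : Matrix (Fin n) (Fin n) ℝ) (hA : IsHurwitz A)
    (M : Matrix (Fin n) (Fin n) ℝ) (i j : Fin n) :
    IntegrableOn (fun t : ℝ => (Aᵀ * lyapF A M t) i j) (Set.Ioi (0:ℝ)) := by
  have heq : (fun t : ℝ => (Aᵀ * lyapF A M t) i j)
      = fun t : ℝ => ∑ k : Fin n, Aᵀ i k * lyapF A M t k j := by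
    funext t; rw [Matrix.mul_apply]
  rw [heq]
  exact MeasureTheory.integrable_finset_sum _
    (fun k _ => (lyapF_integrable A hA M k j).const_mul _)

lemma lyapF_mulright_integrable (A : Matrix (Fin n) (Fin n) ℝ) (hA : IsHurwitz A)
    (M : Matrix (Fin n) (Fin n) ℝ) (i j : Fin n) :
    IntegrableOn (fun t : ℝ => (lyapF A M t * A) i j) (Set.Ioi (0:ℝ)) := by
  have heq : (fun t : ℝ => (lyapF A M t * A) i j)
      = fun t : ℝ => ∑ k : Fin n, lyapF A M t i k * A k j := by
    funext t; rw [Matrix.mul_apply]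
  rw [heq]
  exact MeasureTheory.integrable_finset_sum _
    (fun k _ => (lyapF_integrable A hA M i k).mul_const _)

lemma lyapF_tendsto (A : Matrix (Fin n) (Fin n) ℝ) (hA : IsHurwitz A)
    (M : Matrix (Fin n) (Fin n) ℝ) (i j : Fin n) :
    Filter.Tendsto (fun t : ℝ => lyapF A M t i j) Filter.atTop (nhds 0) := by
  obtain ⟨c, ε, hc, hε, hdec⟩ := hurwitz_entry_decay A hA
  apply squeeze_zero_norm'
    (a := fun t => (∑ a : Fin n, ∑ b : Fin n, |M a b|) * (c ^ 2 * Real.exp (-(2 * ε * t))))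
  · filter_upwards [Filter.eventually_ge_atTop (0:ℝ)] with t ht
    rw [Real.norm_eq_abs]
    exact lyapF_bound A M hc hdec ht i j
  · have h1 : Filter.Tendsto (fun t : ℝ => (2 * ε) * t) Filter.atTop Filter.atTop :=
      Filter.Tendsto.const_mul_atTop (by positivity) Filter.tendsto_id
    have h2 : Filter.Tendsto (fun t : ℝ => -(2 * ε * t)) Filter.atTop Filter.atBot := by
      have h := Filter.tendsto_neg_atTop_atBot.comp h1
      have heq : (fun t : ℝ => -(2 * ε * t)) = (Neg.neg ∘ fun t : ℝ => (2 * ε) * t) := by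
        funext t
        show -(2 * ε * t) = -((2 * ε) * t)
        ring
      rw [heq]
      exact h
    have h3 : Filter.Tendsto (fun t : ℝ => Real.exp (-(2 * ε * t))) Filter.atTop (nhds 0) :=
      Real.tendsto_exp_atBot.comp h2
    have := (h3.const_mul ((∑ a : Fin n, ∑ b : Fin n, |M a b|) * c ^ 2))
    simpa [mul_assoc, mul_zero] using this

lemma lyapF_zero (A M : Matrix (Fin n) (Fin n) ℝ) : lyapF A M 0 = M := by
  rw [lyapF, zero_smul, zero_smul, NormedSpace.exp_zero, one_mul, mul_one]

lemma lyap_entry_integral (A : Matrix (Fin n) (Fin n) ℝ) (hA : IsHurwitz A)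
    (M : Matrix (Fin n) (Fin n) ℝ) (i j : Fin n) :
    ∫ t in Set.Ioi (0:ℝ), (Aᵀ * lyapF A M t + lyapF A M t * A) i j = -(M i j) := by
  set l : Matrix (Fin n) (Fin n) ℝ →ₗ[ℝ] ℝ :=
    (LinearMap.proj j).comp (LinearMap.proj (R := ℝ) (φ := fun _ : Fin n => Fin n → ℝ) i)
    with hl_def
  have hD : ∀ t ∈ Set.Ici (0:ℝ), HasDerivAt (fun s : ℝ => lyapF A M s i j)
      ((Aᵀ * lyapF A M t + lyapF A M t * A) i j) t := by
    intro t _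
    have h := (l.toContinuousLinearMap.hasFDerivAt).comp_hasDerivAt t
      (lyapF_hasDerivAt A M t)
    exact h
  have hInt : IntegrableOn (fun t : ℝ => (Aᵀ * lyapF A M t + lyapF A M t * A) i j)
      (Set.Ioi (0:ℝ)) := by
    have heq : (fun t : ℝ => (Aᵀ * lyapF A M t + lyapF A M t * A) i j)
        = fun t : ℝ => (Aᵀ * lyapF A M t) i j + (lyapF A M t * A) i j := by
      funext t; rw [Matrix.add_apply]
    rw [heq]
    exact (lyapF_mulleft_integrable A hA M i j).add (lyapF_mulright_integrable A hA M i j)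
  have htend := lyapF_tendsto A hA M i j
  have := MeasureTheory.integral_Ioi_of_hasDerivAt_of_tendsto' hD hInt htend
  rw [this, lyapF_zero, zero_sub]

lemma lyap_eq (A : Matrix (Fin n) (Fin n) ℝ) (hA : IsHurwitz A)
    (M : Matrix (Fin n) (Fin n) ℝ) :
    Aᵀ * (Matrix.of fun i j => ∫ t in Set.Ioi (0:ℝ), lyapF A M t i j)
      + (Matrix.of fun i j => ∫ t in Set.Ioi (0:ℝ), lyapF A M t i j) * A + M = 0 := by
  set L : Matrix (Fin n) (Fin n) ℝ :=
    Matrix.of fun i j => ∫ t in Set.Ioi (0:ℝ), lyapF A M t i j with hL_def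
  ext i j
  have h1 : (Aᵀ * L) i j = ∫ t in Set.Ioi (0:ℝ), (Aᵀ * lyapF A M t) i j := by
    rw [Matrix.mul_apply]
    have : ∀ k : Fin n, Aᵀ i k * L k j = ∫ t in Set.Ioi (0:ℝ), Aᵀ i k * lyapF A M t k j := by
      intro k
      rw [hL_def, Matrix.of_apply, ← MeasureTheory.integral_const_mul]
    simp_rw [this]
    rw [← MeasureTheory.integral_finset_sum _
      (fun k _ => (lyapF_integrable A hA M k j).const_mul _)]
    simp only [Matrix.mul_apply]
  have h2 : (L * A) i j = ∫ t in Set.Ioi (0:ℝ), (lyapF A M t * A) i j := by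
    rw [Matrix.mul_apply]
    have : ∀ k : Fin n, L i k * A k j = ∫ t in Set.Ioi (0:ℝ), lyapF A M t i k * A k j := by
      intro k
      rw [hL_def, Matrix.of_apply, ← MeasureTheory.integral_mul_const]
    simp_rw [this]
    rw [← MeasureTheory.integral_finset_sum _
      (fun k _ => (lyapF_integrable A hA M i k).mul_const _)]
    simp only [Matrix.mul_apply]
  have h3 : (Aᵀ * L + L * A + M) i j = (Aᵀ * L) i j + (L * A) i j + M i j := by
    rw [Matrix.add_apply, Matrix.add_apply]
  rw [Matrix.zero_apply, h3, h1, h2, ← MeasureTheory.integral_add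
    (lyapF_mulleft_integrable A hA M i j) (lyapF_mulright_integrable A hA M i j)]
  have h4 : ∫ t in Set.Ioi (0:ℝ), ((Aᵀ * lyapF A M t) i j + (lyapF A M t * A) i j)
      = -(M i j) := by
    rw [← lyap_entry_integral A hA M i j]
    simp only [Matrix.add_apply]
  rw [h4]
  ring

end Lyap

section Fubini

open Set

lemma base_transfer (f : ℝ → ℝ) (hf : IntegrableOn f (Set.Ioi (0:ℝ))) :
    IntegrableOn (fun t : Fin 1 → ℝ => f (t 0))
      (Set.univ.pi fun _ : Fin 1 => Set.Ioi (0:ℝ)) ∧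
    ∫ t in Set.univ.pi (fun _ : Fin 1 => Set.Ioi (0:ℝ)), f (t 0)
      = ∫ s in Set.Ioi (0:ℝ), f s := by
  set e := MeasurableEquiv.funUnique (Fin 1) ℝ with he_def
  have hmp : MeasurePreserving e volume volume :=
    MeasureTheory.volume_preserving_funUnique (Fin 1) ℝ
  have hpre : e ⁻¹' (Set.Ioi (0:ℝ)) = Set.univ.pi fun _ : Fin 1 => Set.Ioi (0:ℝ) := by
    ext t
    simp only [Set.mem_preimage, Set.mem_Ioi, Set.mem_pi, Set.mem_univ, true_implies]
    constructor
    · intro h i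
      have : i = 0 := Subsingleton.elim i 0
      rw [this]
      exact h
    · intro h
      exact h 0
  have hres := hmp.restrict_preimage_emb e.measurableEmbedding (Set.Ioi (0:ℝ))
  rw [hpre] at hres
  have hcomp : (fun t : Fin 1 → ℝ => f (t 0)) = f ∘ e := by
    funext t
    simp only [Function.comp_apply, he_def, MeasurableEquiv.funUnique_apply]
    congr 1
  constructor
  · rw [IntegrableOn, hcomp]
    have hf' : Integrable f ((volume : Measure ℝ).restrict (Set.Ioi (0:ℝ))) := hf
    rw [← hres.map_eq] at hf'
    exact (e.measurableEmbedding.integrable_map_iff).mp hf'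
  · have := hres.integral_comp e.measurableEmbedding f
    rw [show ∫ t in Set.univ.pi (fun _ : Fin 1 => Set.Ioi (0:ℝ)), f (t 0)
      = ∫ t in Set.univ.pi (fun _ : Fin 1 => Set.Ioi (0:ℝ)), (f ∘ e) t from by rw [hcomp]]
    exact this

lemma step_mp (k : ℕ) :
    MeasurePreserving (MeasurableEquiv.piFinSuccAbove (fun _ : Fin (k+2) => ℝ) 0)
      (volume : Measure (Fin (k+2) → ℝ))
      ((volume : Measure ℝ).prod (volume : Measure (Fin (k+1) → ℝ))) := by
  have h := MeasureTheory.measurePreserving_piFinSuccAbove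
    (fun _ : Fin (k+2) => (volume : Measure ℝ)) 0
  rw [show (volume : Measure (Fin (k+2) → ℝ)) = Measure.pi fun _ => volume from
      MeasureTheory.volume_pi,
    show (volume : Measure (Fin (k+1) → ℝ)) = Measure.pi fun _ => volume from
      MeasureTheory.volume_pi]
  exact h

lemma step_preimage (k : ℕ) :
    (MeasurableEquiv.piFinSuccAbove (fun _ : Fin (k+2) => ℝ) 0) ⁻¹'
        ((Set.Ioi (0:ℝ)) ×ˢ (Set.univ.pi fun _ : Fin (k+1) => Set.Ioi (0:ℝ)))
      = Set.univ.pi (fun _ : Fin (k+2) => Set.Ioi (0:ℝ)) := by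
  ext t
  simp only [Set.mem_preimage, MeasurableEquiv.piFinSuccAbove_apply, Set.mem_prod,
    Set.mem_pi, Set.mem_univ, true_implies, Equiv.symm_apply_apply,
    Fin.insertNthEquiv_symm_apply, Fin.removeNth, Fin.succAbove_zero]
  constructor
  · rintro ⟨h0, hs⟩ i
    refine Fin.cases h0 (fun i' => hs i') i
  · intro h
    exact ⟨h 0, fun i' => h _⟩

lemma step_transfer {k : ℕ} (f : ℝ → ℝ) (g : (Fin (k+1) → ℝ) → ℝ)
    (hf : IntegrableOn f (Set.Ioi (0:ℝ)))
    (hg : IntegrableOn g (Set.univ.pi fun _ : Fin (k+1) => Set.Ioi (0:ℝ))) :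
    IntegrableOn (fun t : Fin (k+2) → ℝ => g (fun i => t i.succ) * f (t 0))
      (Set.univ.pi fun _ : Fin (k+2) => Set.Ioi (0:ℝ)) ∧
    ∫ t in Set.univ.pi (fun _ : Fin (k+2) => Set.Ioi (0:ℝ)),
        g (fun i => t i.succ) * f (t 0)
      = (∫ u in Set.univ.pi (fun _ : Fin (k+1) => Set.Ioi (0:ℝ)), g u)
        * ∫ s in Set.Ioi (0:ℝ), f s := by
  have hres := (step_mp k).restrict_preimage_emb
    (MeasurableEquiv.piFinSuccAbove (fun _ : Fin (k+2) => ℝ) 0).measurableEmbedding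
    ((Set.Ioi (0:ℝ)) ×ˢ (Set.univ.pi fun _ : Fin (k+1) => Set.Ioi (0:ℝ)))
  rw [step_preimage k] at hres
  have hFint : Integrable (fun q : ℝ × (Fin (k+1) → ℝ) => f q.1 * g q.2)
      ((((volume : Measure ℝ).restrict (Set.Ioi (0:ℝ))).prod
        ((volume : Measure (Fin (k+1) → ℝ)).restrict
          (Set.univ.pi fun _ : Fin (k+1) => Set.Ioi (0:ℝ))))) := Integrable.mul_prod hf hg
  rw [Measure.prod_restrict] at hFint
  have hcomp : (fun t : Fin (k+2) → ℝ => g (fun i => t i.succ) * f (t 0))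
      = fun t => (fun q : ℝ × (Fin (k+1) → ℝ) => f q.1 * g q.2)
          ((MeasurableEquiv.piFinSuccAbove (fun _ : Fin (k+2) => ℝ) 0) t) := by
    funext t
    simp only [MeasurableEquiv.piFinSuccAbove_apply, Fin.insertNthEquiv_symm_apply,
      Fin.removeNth, Fin.succAbove_zero]
    exact mul_comm _ _
  constructor
  · rw [IntegrableOn, hcomp]
    have hF' := hFint
    rw [← hres.map_eq] at hF'
    exact ((MeasurableEquiv.piFinSuccAbove (fun _ : Fin (k+2) => ℝ)
      0).measurableEmbedding.integrable_map_iff).mp hF'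
  · have h1 := hres.integral_comp
      (MeasurableEquiv.piFinSuccAbove (fun _ : Fin (k+2) => ℝ) 0).measurableEmbedding
      (fun q : ℝ × (Fin (k+1) → ℝ) => f q.1 * g q.2)
    rw [hcomp, h1, ← Measure.prod_restrict, MeasureTheory.integral_prod_mul f g]
    exact mul_comm _ _

end Fubini

section Algebra

lemma quad_entry {m q : ℕ} (R : Matrix (Fin m) (Fin q) ℝ) (Q : Matrix (Fin m) (Fin m) ℝ)
    (i j : Fin q) :
    (Rᵀ * Q * R) i j = ∑ a : Fin m, ∑ b : Fin m, Q a b * (R a i * R b j) := by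
  simp only [Matrix.mul_apply, Matrix.transpose_apply, Finset.sum_mul]
  rw [Finset.sum_comm]
  refine Finset.sum_congr rfl fun a _ => Finset.sum_congr rfl fun b _ => by ring

lemma stdBasis_sum {m : ℕ} (a b : Fin m) (x : Fin m → Fin m → ℝ) :
    ∑ a' : Fin m, ∑ b' : Fin m, Matrix.single a b (1:ℝ) a' b' * x a' b' = x a b := by
  simp [Matrix.single, ite_and, Finset.sum_ite_eq, Finset.mem_univ]

lemma lyapF_prod_entry {m q : ℕ} (A : Matrix (Fin q) (Fin q) ℝ) (K : Matrix (Fin m) (Fin q) ℝ)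
    (Q : Matrix (Fin m) (Fin m) ℝ) (s : ℝ) (i j : Fin q) :
    lyapF A (Kᵀ * Q * K) s i j
      = ∑ a : Fin m, ∑ b : Fin m, Q a b * ((K * NormedSpace.exp (s • A)) a i
        * (K * NormedSpace.exp (s • A)) b j) := by
  rw [lyapF_eq]
  have h : (NormedSpace.exp (s • A))ᵀ * (Kᵀ * Q * K) * NormedSpace.exp (s • A)
      = (K * NormedSpace.exp (s • A))ᵀ * Q * (K * NormedSpace.exp (s • A)) := by
    rw [Matrix.transpose_mul]
    simp only [Matrix.mul_assoc]
  rw [h, quad_entry]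

lemma lyapF_std_entry {m q : ℕ} (A : Matrix (Fin q) (Fin q) ℝ) (K : Matrix (Fin m) (Fin q) ℝ)
    (a b : Fin m) (s : ℝ) (i j : Fin q) :
    lyapF A (Kᵀ * Matrix.single a b (1:ℝ) * K) s i j
      = (K * NormedSpace.exp (s • A)) a i * (K * NormedSpace.exp (s • A)) b j := by
  rw [lyapF_prod_entry]
  exact stdBasis_sum a b _

lemma obs_entry_expand {p m q : ℕ} (h : Matrix (Fin p) (Fin m) ℝ) (K : Matrix (Fin m) (Fin q) ℝ)
    (A : Matrix (Fin q) (Fin q) ℝ) (s : ℝ) (i j : Fin q) :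
    ((h * K * NormedSpace.exp (s • A))ᵀ * (h * K * NormedSpace.exp (s • A))) i j
      = ∑ a : Fin m, ∑ b : Fin m, (hᵀ * h) a b
          * lyapF A (Kᵀ * Matrix.single a b (1:ℝ) * K) s i j := by
  have h1 : (h * K * NormedSpace.exp (s • A))ᵀ * (h * K * NormedSpace.exp (s • A))
      = (K * NormedSpace.exp (s • A))ᵀ * (hᵀ * h) * (K * NormedSpace.exp (s • A)) := by
    rw [show h * K * NormedSpace.exp (s • A) = h * (K * NormedSpace.exp (s • A)) from
      Matrix.mul_assoc _ _ _, Matrix.transpose_mul]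
    simp only [Matrix.mul_assoc]
  rw [h1, quad_entry]
  refine Finset.sum_congr rfl fun a _ => Finset.sum_congr rfl fun b _ => ?_
  rw [lyapF_std_entry]

lemma obs_entry_base {p q : ℕ} (C : Matrix (Fin p) (Fin q) ℝ) (A : Matrix (Fin q) (Fin q) ℝ)
    (s : ℝ) (i j : Fin q) :
    ((C * NormedSpace.exp (s • A))ᵀ * (C * NormedSpace.exp (s • A))) i j
      = lyapF A (Cᵀ * C) s i j := by
  rw [lyapF_eq, Matrix.transpose_mul]
  simp only [Matrix.mul_assoc]

end Algebra

lemma obsFun_swap : ∀ (k : ℕ) {n1 n2 p : ℕ}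
    (A1 : Matrix (Fin n1) (Fin n1) ℝ) (A2 : Matrix (Fin n2) (Fin n2) ℝ)
    (C1 : Matrix (Fin p) (Fin n1) ℝ) (C2 : Matrix (Fin p) (Fin n2) ℝ)
    (K1 : Matrix (Fin n2) (Fin n1) ℝ) (K2 : Matrix (Fin n1) (Fin n2) ℝ),
    (obsFun A1 A2 C1 C2 K1 K2 k).2 = (obsFun A2 A1 C2 C1 K2 K1 k).1 := by
  intro k
  induction k with
  | zero => intros; rfl
  | succ k ih =>
    intro n1 n2 p A1 A2 C1 C2 K1 K2
    simp only [obsFun]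
    rw [ih A2 A1 C2 C1 K2 K1]

lemma main_integrable : ∀ (k : ℕ) {n1 n2 p : ℕ}
    (A1 : Matrix (Fin n1) (Fin n1) ℝ) (A2 : Matrix (Fin n2) (Fin n2) ℝ)
    (C1 : Matrix (Fin p) (Fin n1) ℝ) (C2 : Matrix (Fin p) (Fin n2) ℝ)
    (K1 : Matrix (Fin n2) (Fin n1) ℝ) (K2 : Matrix (Fin n1) (Fin n2) ℝ),
    IsHurwitz A1 → IsHurwitz A2 → ∀ i j,
    IntegrableOn
      (fun t => (((obsFun A1 A2 C1 C2 K1 K2 k).1 t)ᵀ * (obsFun A1 A2 C1 C2 K1 K2 k).1 t) i j)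
      (Set.univ.pi (fun _ : Fin (k + 1) => Set.Ioi (0:ℝ))) := by
  intro k
  induction k with
  | zero =>
    intro n1 n2 p A1 A2 C1 C2 K1 K2 hA1 hA2 i j
    have heq : (fun t : Fin 1 → ℝ =>
        (((obsFun A1 A2 C1 C2 K1 K2 0).1 t)ᵀ * (obsFun A1 A2 C1 C2 K1 K2 0).1 t) i j)
        = fun t : Fin 1 → ℝ => lyapF A1 (C1ᵀ * C1) (t 0) i j := by
      funext t
      exact obs_entry_base C1 A1 (t 0) i j
    rw [heq]
    exact (base_transfer _ (lyapF_integrable A1 hA1 (C1ᵀ * C1) i j)).1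
  | succ k ih =>
    intro n1 n2 p A1 A2 C1 C2 K1 K2 hA1 hA2 i j
    have hg : ∀ a b, IntegrableOn
        (fun u => (((obsFun A1 A2 C1 C2 K1 K2 k).2 u)ᵀ * (obsFun A1 A2 C1 C2 K1 K2 k).2 u) a b)
        (Set.univ.pi (fun _ : Fin (k + 1) => Set.Ioi (0:ℝ))) := by
      intro a b
      rw [obsFun_swap k A1 A2 C1 C2 K1 K2]
      exact ih A2 A1 C2 C1 K2 K1 hA2 hA1 a b
    have heq : (fun t : Fin (k + 2) → ℝ =>
        (((obsFun A1 A2 C1 C2 K1 K2 (k+1)).1 t)ᵀ * (obsFun A1 A2 C1 C2 K1 K2 (k+1)).1 t) i j)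
        = fun t : Fin (k + 2) → ℝ => ∑ a : Fin n2, ∑ b : Fin n2,
            (((obsFun A1 A2 C1 C2 K1 K2 k).2 (fun i => t i.succ))ᵀ
              * (obsFun A1 A2 C1 C2 K1 K2 k).2 (fun i => t i.succ)) a b
            * lyapF A1 (K1ᵀ * Matrix.single a b (1:ℝ) * K1) (t 0) i j := by
      funext t
      exact obs_entry_expand _ K1 A1 (t 0) i j
    rw [heq]
    apply MeasureTheory.integrable_finset_sum
    intro a _
    apply MeasureTheory.integrable_finset_sum
    intro b _
    exact (step_transfer (fun s => lyapF A1 (K1ᵀ * Matrix.single a b (1:ℝ) * K1) s i j)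
      (fun u => (((obsFun A1 A2 C1 C2 K1 K2 k).2 u)ᵀ
        * (obsFun A1 A2 C1 C2 K1 K2 k).2 u) a b)
      (lyapF_integrable A1 hA1 _ i j) (hg a b)).1

lemma obsGram_swap {n1 n2 p : ℕ}
    (A1 : Matrix (Fin n1) (Fin n1) ℝ) (A2 : Matrix (Fin n2) (Fin n2) ℝ)
    (C1 : Matrix (Fin p) (Fin n1) ℝ) (C2 : Matrix (Fin p) (Fin n2) ℝ)
    (K1 : Matrix (Fin n2) (Fin n1) ℝ) (K2 : Matrix (Fin n1) (Fin n2) ℝ) (k : ℕ) :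
    obsGram2 A1 A2 C1 C2 K1 K2 k = obsGram1 A2 A1 C2 C1 K2 K1 k := by
  unfold obsGram1 obsGram2
  rw [obsFun_swap k A1 A2 C1 C2 K1 K2]

lemma gram_succ {n1 n2 p : ℕ}
    (A1 : Matrix (Fin n1) (Fin n1) ℝ) (A2 : Matrix (Fin n2) (Fin n2) ℝ)
    (C1 : Matrix (Fin p) (Fin n1) ℝ) (C2 : Matrix (Fin p) (Fin n2) ℝ)
    (K1 : Matrix (Fin n2) (Fin n1) ℝ) (K2 : Matrix (Fin n1) (Fin n2) ℝ)
    (hA1 : IsHurwitz A1) (hA2 : IsHurwitz A2) (k : ℕ) :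
    obsGram1 A1 A2 C1 C2 K1 K2 (k + 1)
      = Matrix.of fun i j => ∫ t in Set.Ioi (0:ℝ),
          lyapF A1 (K1ᵀ * obsGram2 A1 A2 C1 C2 K1 K2 k * K1) t i j := by
  ext i j
  show (∫ t in Set.univ.pi (fun _ : Fin (k + 2) => Set.Ioi (0:ℝ)),
      (((obsFun A1 A2 C1 C2 K1 K2 (k+1)).1 t)ᵀ * (obsFun A1 A2 C1 C2 K1 K2 (k+1)).1 t) i j)
    = ∫ t in Set.Ioi (0:ℝ), lyapF A1 (K1ᵀ * obsGram2 A1 A2 C1 C2 K1 K2 k * K1) t i j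
  have hg : ∀ a b, IntegrableOn
      (fun u => (((obsFun A1 A2 C1 C2 K1 K2 k).2 u)ᵀ * (obsFun A1 A2 C1 C2 K1 K2 k).2 u) a b)
      (Set.univ.pi (fun _ : Fin (k + 1) => Set.Ioi (0:ℝ))) := by
    intro a b
    rw [obsFun_swap k A1 A2 C1 C2 K1 K2]
    exact main_integrable k A2 A1 C2 C1 K2 K1 hA2 hA1 a b
  have heq : (fun t : Fin (k + 2) → ℝ =>
      (((obsFun A1 A2 C1 C2 K1 K2 (k+1)).1 t)ᵀ * (obsFun A1 A2 C1 C2 K1 K2 (k+1)).1 t) i j)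
      = fun t : Fin (k + 2) → ℝ => ∑ a : Fin n2, ∑ b : Fin n2,
          (((obsFun A1 A2 C1 C2 K1 K2 k).2 (fun i => t i.succ))ᵀ
            * (obsFun A1 A2 C1 C2 K1 K2 k).2 (fun i => t i.succ)) a b
          * lyapF A1 (K1ᵀ * Matrix.single a b (1:ℝ) * K1) (t 0) i j := by
    funext t
    exact obs_entry_expand _ K1 A1 (t 0) i j
  rw [show (∫ t in Set.univ.pi (fun _ : Fin (k + 2) => Set.Ioi (0:ℝ)),
      (((obsFun A1 A2 C1 C2 K1 K2 (k+1)).1 t)ᵀ * (obsFun A1 A2 C1 C2 K1 K2 (k+1)).1 t) i j)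
    = ∫ t in Set.univ.pi (fun _ : Fin (k + 2) => Set.Ioi (0:ℝ)),
        ∑ a : Fin n2, ∑ b : Fin n2,
          (((obsFun A1 A2 C1 C2 K1 K2 k).2 (fun i => t i.succ))ᵀ
            * (obsFun A1 A2 C1 C2 K1 K2 k).2 (fun i => t i.succ)) a b
          * lyapF A1 (K1ᵀ * Matrix.single a b (1:ℝ) * K1) (t 0) i j from by rw [heq]]
  rw [MeasureTheory.integral_finset_sum _ (fun a _ => MeasureTheory.integrable_finset_sum _
    (fun b _ => (step_transfer _ _ (lyapF_integrable A1 hA1 _ i j) (hg a b)).1))]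
  have hab : ∀ a b : Fin n2,
      (∫ t in Set.univ.pi (fun _ : Fin (k + 2) => Set.Ioi (0:ℝ)),
        (((obsFun A1 A2 C1 C2 K1 K2 k).2 (fun i => t i.succ))ᵀ
          * (obsFun A1 A2 C1 C2 K1 K2 k).2 (fun i => t i.succ)) a b
        * lyapF A1 (K1ᵀ * Matrix.single a b (1:ℝ) * K1) (t 0) i j)
      = obsGram2 A1 A2 C1 C2 K1 K2 k a b
        * ∫ s in Set.Ioi (0:ℝ), lyapF A1 (K1ᵀ * Matrix.single a b (1:ℝ) * K1) s i j := by
    intro a b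
    exact (step_transfer (fun s => lyapF A1 (K1ᵀ * Matrix.single a b (1:ℝ) * K1) s i j)
      (fun u => (((obsFun A1 A2 C1 C2 K1 K2 k).2 u)ᵀ
        * (obsFun A1 A2 C1 C2 K1 K2 k).2 u) a b)
      (lyapF_integrable A1 hA1 _ i j) (hg a b)).2
  have hstep : (∑ a : Fin n2, ∫ t in Set.univ.pi (fun _ : Fin (k + 2) => Set.Ioi (0:ℝ)),
      ∑ b : Fin n2,
        (((obsFun A1 A2 C1 C2 K1 K2 k).2 (fun i => t i.succ))ᵀ
          * (obsFun A1 A2 C1 C2 K1 K2 k).2 (fun i => t i.succ)) a b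
        * lyapF A1 (K1ᵀ * Matrix.single a b (1:ℝ) * K1) (t 0) i j)
      = ∑ a : Fin n2, ∑ b : Fin n2, obsGram2 A1 A2 C1 C2 K1 K2 k a b
        * ∫ s in Set.Ioi (0:ℝ), lyapF A1 (K1ᵀ * Matrix.single a b (1:ℝ) * K1) s i j := by
    refine Finset.sum_congr rfl fun a _ => ?_
    rw [MeasureTheory.integral_finset_sum _
      (fun b _ => (step_transfer _ _ (lyapF_integrable A1 hA1 _ i j) (hg a b)).1)]
    exact Finset.sum_congr rfl fun b _ => hab a b
  rw [hstep]
  -- now convert RHS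
  have hrhs : (∫ t in Set.Ioi (0:ℝ), lyapF A1 (K1ᵀ * obsGram2 A1 A2 C1 C2 K1 K2 k * K1) t i j)
      = ∑ a : Fin n2, ∑ b : Fin n2, obsGram2 A1 A2 C1 C2 K1 K2 k a b
        * ∫ s in Set.Ioi (0:ℝ), lyapF A1 (K1ᵀ * Matrix.single a b (1:ℝ) * K1) s i j := by
    have hpt : (fun t : ℝ => lyapF A1 (K1ᵀ * obsGram2 A1 A2 C1 C2 K1 K2 k * K1) t i j)
        = fun t : ℝ => ∑ a : Fin n2, ∑ b : Fin n2, obsGram2 A1 A2 C1 C2 K1 K2 k a b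
          * lyapF A1 (K1ᵀ * Matrix.single a b (1:ℝ) * K1) t i j := by
      funext t
      rw [lyapF_prod_entry]
      refine Finset.sum_congr rfl fun a _ => Finset.sum_congr rfl fun b _ => ?_
      rw [lyapF_std_entry]
    rw [hpt]
    refine (MeasureTheory.integral_finset_sum _ (fun a _ => MeasureTheory.integrable_finset_sum _
      (fun b _ => (lyapF_integrable A1 hA1 _ i j).const_mul _))).trans ?_
    refine Finset.sum_congr rfl fun a _ => ?_
    refine (MeasureTheory.integral_finset_sum _
      (fun b _ => (lyapF_integrable A1 hA1 _ i j).const_mul _)).trans ?_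
    exact Finset.sum_congr rfl fun b _ => MeasureTheory.integral_const_mul _ _
  rw [hrhs]


/-- for Hurwitz `A₁, A₂`, all level-`k` observability Gramians exist and, for
every `k ≥ 2`, they satisfy the coupled Lyapunov recursions
`A₁ᵀ Q₁^{(k)} + Q₁^{(k)} A₁ + K₁ᵀ Q₂^{(k−1)} K₁ = 0` and
`A₂ᵀ Q₂^{(k)} + Q₂^{(k)} A₂ + K₂ᵀ Q₁^{(k−1)} K₂ = 0`.
(`obsGram1 … k` is the level-`(k+1)` Gramian.) -/
theorem stmt_1 {n1 n2 p : ℕ}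
    (A1 : Matrix (Fin n1) (Fin n1) ℝ) (A2 : Matrix (Fin n2) (Fin n2) ℝ)
    (C1 : Matrix (Fin p) (Fin n1) ℝ) (C2 : Matrix (Fin p) (Fin n2) ℝ)
    (K1 : Matrix (Fin n2) (Fin n1) ℝ) (K2 : Matrix (Fin n1) (Fin n2) ℝ)
    (hA1 : IsHurwitz A1) (hA2 : IsHurwitz A2) :
    (∀ k : ℕ, ∀ i j,
        IntegrableOn
          (fun t => (((obsFun A1 A2 C1 C2 K1 K2 k).1 t)ᵀ *
              (obsFun A1 A2 C1 C2 K1 K2 k).1 t) i j)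
          (Set.univ.pi (fun _ : Fin (k + 1) => Set.Ioi (0:ℝ)))) ∧
    (∀ k : ℕ, ∀ i j,
        IntegrableOn
          (fun t => (((obsFun A1 A2 C1 C2 K1 K2 k).2 t)ᵀ *
              (obsFun A1 A2 C1 C2 K1 K2 k).2 t) i j)
          (Set.univ.pi (fun _ : Fin (k + 1) => Set.Ioi (0:ℝ)))) ∧
    (∀ k : ℕ,
        A1ᵀ * obsGram1 A1 A2 C1 C2 K1 K2 (k + 1) +
            obsGram1 A1 A2 C1 C2 K1 K2 (k + 1) * A1 +
            K1ᵀ * obsGram2 A1 A2 C1 C2 K1 K2 k * K1 = 0 ∧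
        A2ᵀ * obsGram2 A1 A2 C1 C2 K1 K2 (k + 1) +
            obsGram2 A1 A2 C1 C2 K1 K2 (k + 1) * A2 +
            K2ᵀ * obsGram1 A1 A2 C1 C2 K1 K2 k * K2 = 0) := by
  refine ⟨fun k i j => main_integrable k A1 A2 C1 C2 K1 K2 hA1 hA2 i j, ?_, ?_⟩
  · intro k i j
    have h := main_integrable k A2 A1 C2 C1 K2 K1 hA2 hA1 i j
    rw [obsFun_swap k A1 A2 C1 C2 K1 K2]
    exact h
  · intro k
    constructor
    · rw [gram_succ A1 A2 C1 C2 K1 K2 hA1 hA2 k]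
      exact lyap_eq A1 hA1 (K1ᵀ * obsGram2 A1 A2 C1 C2 K1 K2 k * K1)
    · rw [obsGram_swap A1 A2 C1 C2 K1 K2 (k+1), gram_succ A2 A1 C2 C1 K2 K1 hA2 hA1 k,
        ← obsGram_swap A2 A1 C2 C1 K2 K1 k]
      exact lyap_eq A2 hA2 (K2ᵀ * obsGram2 A2 A1 C2 C1 K2 K1 k * K2)
end

section
/- Consider an LSS with D modes in balanced form: for each mode q there is a diagonal positive definite matrix Λ_q ∈ ℝ^{n_q×n_q}, partitioned as Λ_q = diag(Λ̂_q, β_q) with Λ̂_q ∈ ℝ^{(n_q−1)×(n_q−1)} and β_q > 0, and there is M > 0 such that A_q Λ_q + Λ_q A_qᵀ + M Λ_q + B_q B_qᵀ ≺ 0 and A_qᵀ Λ_q + Λ_q A_q + M Λ_q + C_qᵀ C_q ≺ 0 for all q. Let the one-step truncated system (Â_q, B̂_q, Ĉ_q, K̂_{q1,q2}) be obtained by keeping the leading (n_q−1)-blocks. Fix a mode q active on an interval, let x̄(t) ∈ ℝ^{n_q} solve x̄' = A_q x̄ + B_q u and x̂(t) ∈ ℝ^{n_q−1} solve x̂' =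 Â_q x̂ + B̂_q u on that interval, with outputs y = C_q x̄ and ŷ = Ĉ_q x̂. Write x̄ = (x̄₁; x̄₂) with x̄₂ ∈ ℝ the last component, set x_o = (x̄₁ − x̂; x̄₂), x_c = (x̄₁ + x̂; x̄₂), V(t) = x_oᵀ Λ_q x_o + β_q² x_cᵀ Λ_q^{−1} x_c, and β = max_q β_q. Then for all t in the interval, dV/dt ≤ −M V(t) + 4β² ‖u(t)‖₂² − ‖y(t) − ŷ(t)‖₂². -/
open Matrix

set_option maxHeartbeats 1600000

/-- Lemma 3: an LSS with `D` modes in balanced form, mode `q` having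
dimension `n q + 1` and diagonal positive definite Gramian `Λ_q = diagonal (d q)`
(partitioned as `diag(Λ̂_q, β_q)` with `β_q = d q (last)`), satisfying the strict
balanced Lyapunov inequalities with constant `M > 0`.  For a fixed mode `q` active on an
interval `(a,b)`, with `x̄` a solution of the full dynamics and `x̂` of the one-step
truncated dynamics, setting `x_o = (x̄₁ − x̂; x̄₂)`, `x_c = (x̄₁ + x̂; x̄₂)`,
`V = x_oᵀ Λ_q x_o + β_q² x_cᵀ Λ_q⁻¹ x_c` and `β = max_q β_q`, one has
`dV/dt ≤ −M V + 4β² ‖u‖₂² − ‖y − ŷ‖₂²` on `(a,b)`. -/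
theorem stmt_7 {D m p : ℕ} (n : Fin D → ℕ)
    (A : (q : Fin D) → Matrix (Fin (n q + 1)) (Fin (n q + 1)) ℝ)
    (B : (q : Fin D) → Matrix (Fin (n q + 1)) (Fin m) ℝ)
    (C : (q : Fin D) → Matrix (Fin p) (Fin (n q + 1)) ℝ)
    (d : (q : Fin D) → Fin (n q + 1) → ℝ) (hd : ∀ q i, 0 < d q i)
    (M : ℝ) (hM : 0 < M)
    (hLyapR : ∀ q, (-(A q * Matrix.diagonal (d q) + Matrix.diagonal (d q) * (A q)ᵀ +
        M • Matrix.diagonal (d q) + B q * (B q)ᵀ)).PosDef)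
    (hLyapO : ∀ q, (-((A q)ᵀ * Matrix.diagonal (d q) + Matrix.diagonal (d q) * A q +
        M • Matrix.diagonal (d q) + (C q)ᵀ * C q)).PosDef)
    (β : ℝ) (hβ : IsGreatest (Set.range fun q => d q (Fin.last (n q))) β)
    (q : Fin D) (a b : ℝ) (u : ℝ → Fin m → ℝ)
    (xbar : ℝ → Fin (n q + 1) → ℝ) (xhat : ℝ → Fin (n q) → ℝ)
    (hxbar : ∀ t ∈ Set.Ioo a b,
      HasDerivAt xbar ((A q).mulVec (xbar t) + (B q).mulVec (u t)) t)
    (hxhat : ∀ t ∈ Set.Ioo a b,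
      HasDerivAt xhat
        (((A q).submatrix Fin.castSucc Fin.castSucc).mulVec (xhat t) +
          ((B q).submatrix Fin.castSucc id).mulVec (u t)) t) :
    let xo : ℝ → Fin (n q + 1) → ℝ := fun s =>
      Fin.snoc (fun i : Fin (n q) => xbar s i.castSucc - xhat s i) (xbar s (Fin.last (n q)))
    let xc : ℝ → Fin (n q + 1) → ℝ := fun s =>
      Fin.snoc (fun i : Fin (n q) => xbar s i.castSucc + xhat s i) (xbar s (Fin.last (n q)))
    let V : ℝ → ℝ := fun s =>
      xo s ⬝ᵥ (Matrix.diagonal (d q)).mulVec (xo s) +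
        (d q (Fin.last (n q))) ^ 2 * (xc s ⬝ᵥ ((Matrix.diagonal (d q))⁻¹).mulVec (xc s))
    ∀ t ∈ Set.Ioo a b,
      deriv V t ≤ -M * V t + 4 * β ^ 2 * (∑ j, (u t j) ^ 2) -
        ∑ j, ((C q).mulVec (xbar t) j - ((C q).submatrix id Fin.castSucc).mulVec (xhat t) j) ^ 2 := by
  intro xo xc V t ht
  have hβq : 0 < d q (Fin.last (n q)) := hd q _
  have hβle : d q (Fin.last (n q)) ≤ β := hβ.2 ⟨q, rfl⟩
  have hinv : (Matrix.diagonal (d q))⁻¹ = Matrix.diagonal (fun i => (d q i)⁻¹) := by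
    apply Matrix.inv_eq_right_inv
    rw [Matrix.diagonal_mul_diagonal]
    ext i j
    by_cases h : i = j
    · subst h
      simp [mul_inv_cancel₀ (hd q i).ne']
    · simp [Matrix.diagonal_apply_ne _ h, Matrix.one_apply_ne h]
  have hV : ∀ s, V s = (∑ i, d q i * (xo s i) ^ 2)
      + (d q (Fin.last (n q))) ^ 2 * ∑ i, (d q i)⁻¹ * (xc s i) ^ 2 := by
    intro s
    simp only [V, hinv, dotProduct, Matrix.mulVec_diagonal]
    congr 1
    · exact Finset.sum_congr rfl fun i _ => by ring
    · congr 1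
      exact Finset.sum_congr rfl fun i _ => by ring
  have hbar := hasDerivAt_pi.mp (hxbar t ht)
  have hhat := hasDerivAt_pi.mp (hxhat t ht)
  set Dxb : Fin (n q + 1) → ℝ := (A q).mulVec (xbar t) + (B q).mulVec (u t) with hDxb
  set Dxh : Fin (n q) → ℝ := ((A q).submatrix Fin.castSucc Fin.castSucc).mulVec (xhat t) +
      ((B q).submatrix Fin.castSucc id).mulVec (u t) with hDxh
  set Do : Fin (n q + 1) → ℝ :=
    Fin.snoc (fun j => Dxb j.castSucc - Dxh j) (Dxb (Fin.last (n q))) with hDo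
  set Dc : Fin (n q + 1) → ℝ :=
    Fin.snoc (fun j => Dxb j.castSucc + Dxh j) (Dxb (Fin.last (n q))) with hDc
  have hdo : ∀ i, HasDerivAt (fun s => xo s i) (Do i) t := by
    intro i
    refine Fin.lastCases ?_ ?_ i
    · simp only [xo, hDo, Fin.snoc_last]
      exact hbar (Fin.last (n q))
    · intro j
      simp only [xo, hDo, Fin.snoc_castSucc]
      exact (hbar j.castSucc).sub (hhat j)
  have hdc : ∀ i, HasDerivAt (fun s => xc s i) (Dc i) t := by
    intro i
    refine Fin.lastCases ?_ ?_ i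
    · simp only [xc, hDc, Fin.snoc_last]
      exact hbar (Fin.last (n q))
    · intro j
      simp only [xc, hDc, Fin.snoc_castSucc]
      exact (hbar j.castSucc).add (hhat j)
  set X := xo t with hXdef
  set Y := xc t with hYdef
  set U := u t with hUdef
  set DV : ℝ := (∑ i, d q i * (2 * X i * Do i)) +
      (d q (Fin.last (n q))) ^ 2 * ∑ i, (d q i)⁻¹ * (2 * Y i * Dc i) with hDV
  have hVd : HasDerivAt V DV t := by
    have hVe : V = fun s => (∑ i, d q i * (xo s i) ^ 2)
        + (d q (Fin.last (n q))) ^ 2 * ∑ i, (d q i)⁻¹ * (xc s i) ^ 2 := funext hV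
    rw [hVe, hDV]
    refine HasDerivAt.add ?_ (HasDerivAt.const_mul _ ?_)
    · refine HasDerivAt.fun_sum fun i _ => ?_
      have h := ((hdo i).pow 2).const_mul (d q i)
      convert h using 1
      · rfl
      · rfl
      rw [← hXdef]
      push_cast
      ring
    · refine HasDerivAt.fun_sum fun i _ => ?_
      have h := ((hdc i).pow 2).const_mul ((d q i)⁻¹)
      convert h using 1
      · rfl
      · rfl
      rw [← hYdef]
      push_cast
      ring
  -- component values of X, Y
  have hXc : ∀ j : Fin (n q), X j.castSucc = xbar t j.castSucc - xhat t j := by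
    intro j; rw [hXdef]; simp only [xo, Fin.snoc_castSucc]
  have hXl : X (Fin.last (n q)) = xbar t (Fin.last (n q)) := by
    rw [hXdef]; simp only [xo, Fin.snoc_last]
  have hYc : ∀ j : Fin (n q), Y j.castSucc = xbar t j.castSucc + xhat t j := by
    intro j; rw [hYdef]; simp only [xc, Fin.snoc_castSucc]
  have hYl : Y (Fin.last (n q)) = xbar t (Fin.last (n q)) := by
    rw [hYdef]; simp only [xc, Fin.snoc_last]
  set w : ℝ := (∑ j, A q (Fin.last (n q)) j.castSucc * xhat t j) +
      (B q).mulVec U (Fin.last (n q)) with hw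
  -- structure of the derivatives
  have hDo1 : ∀ j : Fin (n q), Do j.castSucc = (A q).mulVec X j.castSucc := by
    intro j
    simp only [hDo, Fin.snoc_castSucc, hDxb, hDxh, Pi.add_apply, Matrix.mulVec, dotProduct,
      Matrix.submatrix_apply, id_eq]
    rw [Fin.sum_univ_castSucc (f := fun i => A q j.castSucc i * xbar t i),
      Fin.sum_univ_castSucc (f := fun i => A q j.castSucc i * X i)]
    simp only [hXc, hXl, mul_sub]
    rw [Finset.sum_sub_distrib]
    ring
  have hDo2 : Do (Fin.last (n q)) = (A q).mulVec X (Fin.last (n q)) + w := by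
    simp only [hDo, Fin.snoc_last, hDxb, hw, Pi.add_apply, Matrix.mulVec, dotProduct]
    rw [Fin.sum_univ_castSucc (f := fun i => A q (Fin.last (n q)) i * xbar t i),
      Fin.sum_univ_castSucc (f := fun i => A q (Fin.last (n q)) i * X i)]
    simp only [hXc, hXl, mul_sub]
    rw [Finset.sum_sub_distrib]
    ring
  have hDc1 : ∀ j : Fin (n q), Dc j.castSucc =
      (A q).mulVec Y j.castSucc + 2 * (B q).mulVec U j.castSucc := by
    intro j
    simp only [hDc, Fin.snoc_castSucc, hDxb, hDxh, Pi.add_apply, Matrix.mulVec, dotProduct,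
      Matrix.submatrix_apply, id_eq]
    rw [Fin.sum_univ_castSucc (f := fun i => A q j.castSucc i * xbar t i),
      Fin.sum_univ_castSucc (f := fun i => A q j.castSucc i * Y i)]
    simp only [hYc, hYl, mul_add]
    rw [Finset.sum_add_distrib]
    ring
  have hDc2 : Dc (Fin.last (n q)) =
      (A q).mulVec Y (Fin.last (n q)) + 2 * (B q).mulVec U (Fin.last (n q)) - w := by
    simp only [hDc, Fin.snoc_last, hDxb, hw, Pi.add_apply, Matrix.mulVec, dotProduct]
    rw [Fin.sum_univ_castSucc (f := fun i => A q (Fin.last (n q)) i * xbar t i),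
      Fin.sum_univ_castSucc (f := fun i => A q (Fin.last (n q)) i * Y i)]
    simp only [hYc, hYl, mul_add]
    rw [Finset.sum_add_distrib]
    ring
  have hD1 : ∑ i, d q i * (2 * X i * Do i) =
      (∑ i, d q i * (2 * X i * (A q).mulVec X i)) +
        2 * d q (Fin.last (n q)) * xbar t (Fin.last (n q)) * w := by
    rw [Fin.sum_univ_castSucc (f := fun i => d q i * (2 * X i * Do i)),
      Fin.sum_univ_castSucc (f := fun i => d q i * (2 * X i * (A q).mulVec X i))]
    simp only [hDo1, hDo2, hXl]
    ring
  have hD2 : ∑ i, (d q i)⁻¹ * (2 * Y i * Dc i) =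
      (∑ i, (d q i)⁻¹ * (2 * Y i * (A q).mulVec Y i)) +
        (∑ i, (d q i)⁻¹ * (4 * Y i * (B q).mulVec U i)) -
        2 * (d q (Fin.last (n q)))⁻¹ * xbar t (Fin.last (n q)) * w := by
    rw [Fin.sum_univ_castSucc (f := fun i => (d q i)⁻¹ * (2 * Y i * Dc i)),
      Fin.sum_univ_castSucc (f := fun i => (d q i)⁻¹ * (2 * Y i * (A q).mulVec Y i)),
      Fin.sum_univ_castSucc (f := fun i => (d q i)⁻¹ * (4 * Y i * (B q).mulVec U i))]
    simp only [hDc1, hDc2, hYl]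
    rw [Finset.sum_congr rfl (fun j _ => show
        (d q j.castSucc)⁻¹ * (2 * Y j.castSucc *
          ((A q).mulVec Y j.castSucc + 2 * (B q).mulVec U j.castSucc)) =
        (d q j.castSucc)⁻¹ * (2 * Y j.castSucc * (A q).mulVec Y j.castSucc) +
          (d q j.castSucc)⁻¹ * (4 * Y j.castSucc * (B q).mulVec U j.castSucc) from by ring),
      Finset.sum_add_distrib]
    ring
  -- the observability Lyapunov inequality applied to X
  have hO : ∑ i, d q i * (2 * X i * (A q).mulVec X i) ≤
      -M * (∑ i, d q i * (X i) ^ 2) - ∑ j, ((C q).mulVec X j) ^ 2 := by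
    have h0 := (hLyapO q).posSemidef.dotProduct_mulVec_nonneg X
    simp only [star_trivial, Matrix.neg_mulVec, dotProduct_neg, Matrix.add_mulVec,
      dotProduct_add, Matrix.smul_mulVec, dotProduct_smul, smul_eq_mul,
      ← Matrix.mulVec_mulVec] at h0
    rw [Matrix.dotProduct_mulVec X (A q)ᵀ, Matrix.vecMul_transpose,
      Matrix.dotProduct_mulVec X (C q)ᵀ, Matrix.vecMul_transpose] at h0
    simp only [dotProduct, Matrix.mulVec_diagonal] at h0
    have e1 : ∑ i, d q i * (2 * X i * (A q).mulVec X i) =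
        (∑ i, (A q).mulVec X i * (d q i * X i)) + ∑ i, X i * (d q i * (A q).mulVec X i) := by
      rw [← Finset.sum_add_distrib]
      exact Finset.sum_congr rfl fun i _ => by ring
    have e2 : ∑ i, X i * (d q i * X i) = ∑ i, d q i * (X i) ^ 2 :=
      Finset.sum_congr rfl fun i _ => by ring
    have e3 : ∑ j, (C q).mulVec X j * (C q).mulVec X j = ∑ j, ((C q).mulVec X j) ^ 2 :=
      Finset.sum_congr rfl fun j _ => by ring
    rw [e2, e3] at h0
    rw [e1]
    linarith
  -- the reachability Lyapunov inequality applied to Z = Λ⁻¹ Y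
  set Z : Fin (n q + 1) → ℝ := fun i => (d q i)⁻¹ * Y i with hZ
  have hZYi : ∀ i, d q i * Z i = Y i := by
    intro i
    rw [hZ]
    simp only
    rw [← mul_assoc, mul_inv_cancel₀ (hd q i).ne', one_mul]
  have hZY : (Matrix.diagonal (d q)).mulVec Z = Y := by
    ext i
    rw [Matrix.mulVec_diagonal]
    exact hZYi i
  set W : Fin m → ℝ := (B q)ᵀ.mulVec Z with hW
  have hR : ∑ i, (d q i)⁻¹ * (2 * Y i * (A q).mulVec Y i) ≤
      -M * (∑ i, (d q i)⁻¹ * (Y i) ^ 2) - ∑ k, (W k) ^ 2 := by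
    have h0 := (hLyapR q).posSemidef.dotProduct_mulVec_nonneg Z
    simp only [star_trivial, Matrix.neg_mulVec, dotProduct_neg, Matrix.add_mulVec,
      dotProduct_add, Matrix.smul_mulVec, dotProduct_smul, smul_eq_mul,
      ← Matrix.mulVec_mulVec] at h0
    rw [hZY] at h0
    have e4 : Z ⬝ᵥ (Matrix.diagonal (d q)).mulVec ((A q)ᵀ.mulVec Z) =
        ((A q).mulVec Y) ⬝ᵥ Z := by
      have l1 : Z ⬝ᵥ (Matrix.diagonal (d q)).mulVec ((A q)ᵀ.mulVec Z) =
          Y ⬝ᵥ ((A q)ᵀ.mulVec Z) := by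
        simp only [dotProduct, Matrix.mulVec_diagonal]
        exact Finset.sum_congr rfl fun i _ => by rw [← hZYi i]; ring
      rw [l1, Matrix.dotProduct_mulVec, Matrix.vecMul_transpose]
    rw [e4] at h0
    have e5 : Z ⬝ᵥ (B q).mulVec ((B q)ᵀ.mulVec Z) = ∑ k, (W k) ^ 2 := by
      rw [Matrix.dotProduct_mulVec, ← Matrix.mulVec_transpose, ← hW]
      simp only [dotProduct]
      exact Finset.sum_congr rfl fun k _ => by ring
    rw [e5] at h0
    have e6 : ∑ i, (d q i)⁻¹ * (2 * Y i * (A q).mulVec Y i) =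
        Z ⬝ᵥ ((A q).mulVec Y) + ((A q).mulVec Y) ⬝ᵥ Z := by
      simp only [dotProduct, hZ]
      rw [← Finset.sum_add_distrib]
      exact Finset.sum_congr rfl fun i _ => by ring
    have e7 : Z ⬝ᵥ Y = ∑ i, (d q i)⁻¹ * (Y i) ^ 2 := by
      simp only [dotProduct, hZ]
      exact Finset.sum_congr rfl fun i _ => by ring
    rw [e7] at h0
    rw [e6]
    linarith
  have e8 : ∑ i, (d q i)⁻¹ * (4 * Y i * (B q).mulVec U i) = 4 * ∑ k, W k * U k := by
    have l1 : ∑ i, (d q i)⁻¹ * (4 * Y i * (B q).mulVec U i) = 4 * (Z ⬝ᵥ (B q).mulVec U) := by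
      simp only [dotProduct, hZ, Finset.mul_sum]
      exact Finset.sum_congr rfl fun i _ => by ring
    rw [l1, Matrix.dotProduct_mulVec, ← Matrix.mulVec_transpose, ← hW]
    rfl
  have e9 : ∀ j, (C q).mulVec (xbar t) j -
      ((C q).submatrix id Fin.castSucc).mulVec (xhat t) j = (C q).mulVec X j := by
    intro j
    simp only [Matrix.mulVec, dotProduct, Matrix.submatrix_apply, id_eq]
    rw [Fin.sum_univ_castSucc (f := fun i => C q j i * xbar t i),
      Fin.sum_univ_castSucc (f := fun i => C q j i * X i)]
    simp only [hXc, hXl, mul_sub]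
    rw [Finset.sum_sub_distrib]
    ring
  have e9' : ∑ j, ((C q).mulVec (xbar t) j -
      ((C q).submatrix id Fin.castSucc).mulVec (xhat t) j) ^ 2 =
      ∑ j, ((C q).mulVec X j) ^ 2 :=
    Finset.sum_congr rfl fun j _ => by rw [e9 j]
  -- final assembly
  have hSU : (0:ℝ) ≤ ∑ k, (U k) ^ 2 := Finset.sum_nonneg fun k _ => sq_nonneg _
  have hbb : (d q (Fin.last (n q))) ^ 2 ≤ β ^ 2 := by nlinarith
  have c1 : (d q (Fin.last (n q))) ^ 2 * (∑ i, (d q i)⁻¹ * (2 * Y i * (A q).mulVec Y i)) ≤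
      (d q (Fin.last (n q))) ^ 2 * (-M * (∑ i, (d q i)⁻¹ * (Y i) ^ 2) - ∑ k, (W k) ^ 2) :=
    mul_le_mul_of_nonneg_left hR (sq_nonneg _)
  have c2' : 4 * ∑ k, W k * U k ≤ (∑ k, (W k) ^ 2) + 4 * ∑ k, (U k) ^ 2 := by
    have h := Finset.sum_le_sum (s := Finset.univ)
      (fun k _ => (by nlinarith [sq_nonneg (W k - 2 * U k)] :
        4 * (W k * U k) ≤ (W k) ^ 2 + 4 * (U k) ^ 2))
    calc 4 * ∑ k, W k * U k = ∑ k, 4 * (W k * U k) := by rw [Finset.mul_sum]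
      _ ≤ ∑ k, ((W k) ^ 2 + 4 * (U k) ^ 2) := h
      _ = (∑ k, (W k) ^ 2) + 4 * ∑ k, (U k) ^ 2 := by
          rw [Finset.sum_add_distrib, Finset.mul_sum]
  have c2 : (d q (Fin.last (n q))) ^ 2 * (4 * ∑ k, W k * U k) ≤
      (d q (Fin.last (n q))) ^ 2 * ((∑ k, (W k) ^ 2) + 4 * ∑ k, (U k) ^ 2) :=
    mul_le_mul_of_nonneg_left c2' (sq_nonneg _)
  have c3 : (d q (Fin.last (n q))) ^ 2 * (4 * ∑ k, (U k) ^ 2) ≤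
      β ^ 2 * (4 * ∑ k, (U k) ^ 2) :=
    mul_le_mul_of_nonneg_right hbb (by linarith)
  have c4 : (d q (Fin.last (n q))) ^ 2 *
      (2 * (d q (Fin.last (n q)))⁻¹ * xbar t (Fin.last (n q)) * w) =
      2 * d q (Fin.last (n q)) * xbar t (Fin.last (n q)) * w := by
    field_simp
  rw [hVd.deriv, hDV, hD1, hD2, hV t, ← hXdef, ← hYdef, e9', e8]
  linarith
end

section
/- Consider an LSS with D modes. Suppose there exist symmetric positive definite matrices Q_q ∈ ℝ^{n_q×n_q} and constants M, μ > 0 such that A_qᵀ Q_q + Q_q A_q + 2M Q_q ≺ 0 for all modes q, and e^{−Mμ} K_{q1,q2}ᵀ Q_{q2} K_{q1,q2} ≺ Q_{q1} for all q1 ≠ q2 (≺ in the Loewner order). Then the LSS is uniformly exponentially stable with dwell time μ; more precisely, if ε, φ > 0 satisfy ε² Q_q ⪯ I ⪯ φ² Q_q for all q, then every trajectory with zero input and dwell times t_i ≥ μ satisfies ‖x(t)‖₂ ≤ (φ/ε) e^{Mμ/2} e^{−Mt/2} ‖x(0)‖₂ for all t ≥ 0. -/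
open Matrix MeasureTheory

/-- A linear switched system (LSS) with `D` modes: mode `q` has state dimension `n q`,
dynamics matrices `A q`, `B q`, output matrix `C q`, and `K q1 q2` is the coupling matrix
applied to the state when switching from mode `q1` to mode `q2`. -/
structure LSS (D m p : ℕ) where
  n : Fin D → ℕ
  A : (q : Fin D) → Matrix (Fin (n q)) (Fin (n q)) ℝ
  B : (q : Fin D) → Matrix (Fin (n q)) (Fin m) ℝ
  C : (q : Fin D) → Matrix (Fin p) (Fin (n q)) ℝ
  K : (q1 q2 : Fin D) → Matrix (Fin (n q2)) (Fin (n q1)) ℝ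

/-- A switching scenario: a sequence of modes `σ 0, σ 1, …` with `σ i ≠ σ (i+1)` and
strictly increasing switching times `0 = T 0 < T 1 < ⋯`; the `(i+1)`-st dwell time is
`T (i+1) - T i`. -/
structure SwitchingScenario (D : ℕ) where
  σ : ℕ → Fin D
  T : ℕ → ℝ
  hσ : ∀ i, σ i ≠ σ (i + 1)
  hT0 : T 0 = 0
  hTmono : StrictMono T

/-- `x i` is the piece of the trajectory on the interval `[T i, T (i+1)]` (the system is
in mode `σ i` there): it solves the mode-`σ i` linear ODE driven by `u` and satisfies the
jump conditions given by the coupling matrices. -/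
def IsTrajectory {D m p : ℕ} (sys : LSS D m p) (S : SwitchingScenario D)
    (u : ℝ → Fin m → ℝ) (x : (i : ℕ) → ℝ → Fin (sys.n (S.σ i)) → ℝ) : Prop :=
  (∀ i : ℕ, ∀ s ∈ Set.Icc (S.T i) (S.T (i + 1)),
      HasDerivAt (x i) ((sys.A (S.σ i)).mulVec (x i s) + (sys.B (S.σ i)).mulVec (u s)) s) ∧
  (∀ i : ℕ, x (i + 1) (S.T (i + 1)) =
      (sys.K (S.σ i) (S.σ (i + 1))).mulVec (x i (S.T (i + 1))))

/-- `y` is the output of the trajectory `x`: `y t = C_{σ i} (x i t)` for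
`t ∈ (T i, T (i+1)]`. -/
def IsOutput {D m p : ℕ} (sys : LSS D m p) (S : SwitchingScenario D)
    (x : (i : ℕ) → ℝ → Fin (sys.n (S.σ i)) → ℝ) (y : ℝ → Fin p → ℝ) : Prop :=
  ∀ i : ℕ, ∀ s ∈ Set.Ioc (S.T i) (S.T (i + 1)), y s = (sys.C (S.σ i)).mulVec (x i s)

/-- The LSS is uniformly exponentially stable with dwell time `μ`: there exist constants
`K, M' > 0` such that every zero-input trajectory along a switching scenario whose dwell
times are all `≥ μ` satisfies `‖x(t)‖₂ ≤ K e^{−M't} ‖x(0)‖₂` for all `t ≥ 0`. -/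
def UnifExpStable {D m p : ℕ} (sys : LSS D m p) (μ : ℝ) : Prop :=
  ∃ Kc > (0:ℝ), ∃ M' > (0:ℝ),
    ∀ (S : SwitchingScenario D), (∀ i : ℕ, μ ≤ S.T (i + 1) - S.T i) →
      ∀ (x : (i : ℕ) → ℝ → Fin (sys.n (S.σ i)) → ℝ),
        IsTrajectory sys S (fun _ _ => 0) x →
        (Real.sqrt (∑ j, (x 0 0 j) ^ 2) ≤
            Kc * Real.exp (-(M' * 0)) * Real.sqrt (∑ j, (x 0 0 j) ^ 2)) ∧
        ∀ i : ℕ, ∀ t ∈ Set.Ioc (S.T i) (S.T (i + 1)),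
          Real.sqrt (∑ j, (x i t j) ^ 2) ≤
            Kc * Real.exp (-(M' * t)) * Real.sqrt (∑ j, (x 0 0 j) ^ 2)


lemma psd_quad {n : ℕ} {M : Matrix (Fin n) (Fin n) ℝ} (h : M.PosSemidef) (v : Fin n → ℝ) :
    0 ≤ v ⬝ᵥ M.mulVec v := by
  simpa using h.dotProduct_mulVec_nonneg v

lemma quad_tmul {n k : ℕ} (K : Matrix (Fin k) (Fin n) ℝ) (Q : Matrix (Fin k) (Fin k) ℝ)
    (v : Fin n → ℝ) :
    v ⬝ᵥ (Kᵀ * Q * K).mulVec v = (K.mulVec v) ⬝ᵥ Q.mulVec (K.mulVec v) := by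
  rw [Matrix.mul_assoc, ← Matrix.mulVec_mulVec, Matrix.dotProduct_mulVec,
    Matrix.vecMul_transpose, ← Matrix.mulVec_mulVec]

lemma hasDerivAt_quad {n : ℕ} (Q : Matrix (Fin n) (Fin n) ℝ)
    {x : ℝ → Fin n → ℝ} {x' : Fin n → ℝ} {t : ℝ} (hx : HasDerivAt x x' t) :
    HasDerivAt (fun s => x s ⬝ᵥ Q.mulVec (x s))
      (x' ⬝ᵥ Q.mulVec (x t) + x t ⬝ᵥ Q.mulVec x') t := by
  have hcoord : ∀ j, HasDerivAt (fun s => x s j) (x' j) t := fun j => (hasDerivAt_pi.1 hx) j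
  have h : HasDerivAt (fun s => ∑ j, x s j * ∑ k, Q j k * x s k)
      (∑ j, (x' j * (∑ k, Q j k * x t k) + x t j * (∑ k, Q j k * x' k))) t := by
    refine HasDerivAt.fun_sum fun j _ => ?_
    exact (hcoord j).mul (HasDerivAt.fun_sum fun k _ => (hcoord k).const_mul (Q j k))
  have e1 : (fun s => x s ⬝ᵥ Q.mulVec (x s)) = fun s => ∑ j, x s j * ∑ k, Q j k * x s k := by
    funext s; simp [dotProduct, Matrix.mulVec]
  rw [e1]
  convert h using 1
  simp [dotProduct, Matrix.mulVec, Finset.sum_add_distrib]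

lemma exp_gronwall (c a b : ℝ) (V V' : ℝ → ℝ)
    (hd : ∀ s ∈ Set.Icc a b, HasDerivAt V (V' s) s)
    (hb : ∀ s ∈ Set.Icc a b, V' s ≤ -c * V s) :
    ∀ s ∈ Set.Icc a b, ∀ t ∈ Set.Icc a b, s ≤ t →
      Real.exp (c * t) * V t ≤ Real.exp (c * s) * V s := by
  set W : ℝ → ℝ := fun s => Real.exp (c * s) * V s with hW
  have hWd : ∀ s ∈ Set.Icc a b,
      HasDerivAt W (Real.exp (c * s) * c * V s + Real.exp (c * s) * V' s) s := by
    intro s hs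
    have h1 : HasDerivAt (fun s => Real.exp (c * s)) (Real.exp (c * s) * c) s := by
      simpa using ((hasDerivAt_id s).const_mul c).exp
    exact h1.mul (hd s hs)
  have hanti : AntitoneOn W (Set.Icc a b) := by
    apply antitoneOn_of_deriv_nonpos (convex_Icc a b)
    · exact fun s hs => (hWd s hs).continuousAt.continuousWithinAt
    · intro s hs
      rw [interior_Icc] at hs
      exact (hWd s (Set.Ioo_subset_Icc_self hs)).differentiableAt.differentiableWithinAt
    · intro s hs
      rw [interior_Icc] at hs
      have hs' := Set.Ioo_subset_Icc_self hs
      rw [(hWd s hs').deriv]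
      have := hb s hs'
      nlinarith [Real.exp_pos (c * s)]
  intro s hs t ht hst
  exact hanti hs ht hst

lemma sqrt_bound (c s s0 : ℝ) (hc : 0 ≤ c) (h : s ≤ c^2 * s0) :
    Real.sqrt s ≤ c * Real.sqrt s0 := by
  calc Real.sqrt s ≤ Real.sqrt (c^2 * s0) := Real.sqrt_le_sqrt h
  _ = c * Real.sqrt s0 := by rw [Real.sqrt_mul (sq_nonneg c), Real.sqrt_sq hc]

/-- Lemma 4: if positive definite `Q_q` satisfy
`A_qᵀ Q_q + Q_q A_q + 2M Q_q ≺ 0` and `e^{−Mμ} K_{q1,q2}ᵀ Q_{q2} K_{q1,q2} ≺ Q_{q1}` for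
all `q1 ≠ q2`, and `ε² Q_q ⪯ I ⪯ φ² Q_q`, then every zero-input trajectory with dwell
times `≥ μ` satisfies `‖x(t)‖₂ ≤ (φ/ε) e^{Mμ/2} e^{−Mt/2} ‖x(0)‖₂` for all `t ≥ 0`. -/
theorem stmt_10 {D m p : ℕ} (sys : LSS D m p)
    (Q : (q : Fin D) → Matrix (Fin (sys.n q)) (Fin (sys.n q)) ℝ)
    (hQ : ∀ q, (Q q).PosDef)
    (Mc μ : ℝ) (hMc : 0 < Mc) (hμ : 0 < μ)
    (hLyap : ∀ q, (-( (sys.A q)ᵀ * Q q + Q q * sys.A q + (2 * Mc) • Q q)).PosDef)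
    (hK : ∀ q1 q2, q1 ≠ q2 →
      (Q q1 - Real.exp (-(Mc * μ)) • ((sys.K q1 q2)ᵀ * Q q2 * sys.K q1 q2)).PosDef)
    (ε φ : ℝ) (hε : 0 < ε) (hφ : 0 < φ)
    (hlow : ∀ q, ((1 : Matrix (Fin (sys.n q)) (Fin (sys.n q)) ℝ) - ε ^ 2 • Q q).PosSemidef)
    (hhigh : ∀ q, (φ ^ 2 • Q q - (1 : Matrix (Fin (sys.n q)) (Fin (sys.n q)) ℝ)).PosSemidef)
    (S : SwitchingScenario D)
    (hdwell : ∀ i : ℕ, μ ≤ S.T (i + 1) - S.T i)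
    (x : (i : ℕ) → ℝ → Fin (sys.n (S.σ i)) → ℝ)
    (hx : IsTrajectory sys S (fun _ _ => 0) x) :
    (Real.sqrt (∑ j, (x 0 0 j) ^ 2) ≤
        (φ / ε) * Real.exp (Mc * μ / 2) * Real.exp (-(Mc * 0) / 2) *
          Real.sqrt (∑ j, (x 0 0 j) ^ 2)) ∧
    ∀ i : ℕ, ∀ t ∈ Set.Ioc (S.T i) (S.T (i + 1)),
      Real.sqrt (∑ j, (x i t j) ^ 2) ≤
        (φ / ε) * Real.exp (Mc * μ / 2) * Real.exp (-(Mc * t) / 2) *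
          Real.sqrt (∑ j, (x 0 0 j) ^ 2) := by
  classical
  obtain ⟨hx1, hx2⟩ := hx
  set V : (i : ℕ) → ℝ → ℝ := fun i t => x i t ⬝ᵥ (Q (S.σ i)).mulVec (x i t) with hVdef
  have hVnonneg : ∀ i t, 0 ≤ V i t := fun i t => psd_quad (hQ _).posSemidef _
  have hTle : ∀ i, S.T i ≤ S.T (i + 1) := fun i => (S.hTmono (Nat.lt_succ_self i)).le
  -- derivative of trajectory with zero input
  have hder : ∀ i, ∀ s ∈ Set.Icc (S.T i) (S.T (i + 1)),
      HasDerivAt (x i) ((sys.A (S.σ i)).mulVec (x i s)) s := by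
    intro i s hs
    have h := hx1 i s hs
    have h0 : (sys.B (S.σ i)).mulVec (fun _ => (0:ℝ)) = 0 := Matrix.mulVec_zero _
    simpa [h0] using h
  set V' : (i : ℕ) → ℝ → ℝ := fun i s =>
    (sys.A (S.σ i)).mulVec (x i s) ⬝ᵥ (Q (S.σ i)).mulVec (x i s) +
      x i s ⬝ᵥ (Q (S.σ i)).mulVec ((sys.A (S.σ i)).mulVec (x i s)) with hV'def
  have hVder : ∀ i, ∀ s ∈ Set.Icc (S.T i) (S.T (i + 1)), HasDerivAt (V i) (V' i s) s :=
    fun i s hs => hasDerivAt_quad _ (hder i s hs)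
  -- Lyapunov inequality
  have hlyap' : ∀ (q : Fin D) (v : Fin (sys.n q) → ℝ),
      (sys.A q).mulVec v ⬝ᵥ (Q q).mulVec v + v ⬝ᵥ (Q q).mulVec ((sys.A q).mulVec v)
        ≤ -(2 * Mc) * (v ⬝ᵥ (Q q).mulVec v) := by
    intro q v
    have h0 : 0 ≤ v ⬝ᵥ (-((sys.A q)ᵀ * Q q + Q q * sys.A q + (2 * Mc) • Q q)).mulVec v := by
      simpa using (hLyap q).posSemidef.dotProduct_mulVec_nonneg v
    rw [Matrix.neg_mulVec, dotProduct_neg, Matrix.add_mulVec, Matrix.add_mulVec,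
      dotProduct_add, dotProduct_add, Matrix.smul_mulVec,
      dotProduct_smul, smul_eq_mul] at h0
    have e1 : v ⬝ᵥ ((sys.A q)ᵀ * Q q).mulVec v = (sys.A q).mulVec v ⬝ᵥ (Q q).mulVec v := by
      rw [← Matrix.mulVec_mulVec, Matrix.dotProduct_mulVec, Matrix.vecMul_transpose]
    have e2 : v ⬝ᵥ (Q q * sys.A q).mulVec v = v ⬝ᵥ (Q q).mulVec ((sys.A q).mulVec v) := by
      rw [← Matrix.mulVec_mulVec]
    rw [e1, e2] at h0
    linarith
  have hVineq : ∀ i s, V' i s ≤ -(2 * Mc) * V i s := fun i s => hlyap' (S.σ i) (x i s)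
  -- exponential decay within each interval
  have hdecay : ∀ i, ∀ s ∈ Set.Icc (S.T i) (S.T (i + 1)), ∀ t ∈ Set.Icc (S.T i) (S.T (i + 1)),
      s ≤ t → V i t ≤ Real.exp (2 * Mc * (s - t)) * V i s := by
    intro i s hs t ht hst
    have h := exp_gronwall (2 * Mc) (S.T i) (S.T (i + 1)) (V i) (V' i)
      (hVder i) (fun u hu => hVineq i u) s hs t ht hst
    have h2 := mul_le_mul_of_nonneg_left h (Real.exp_pos (-(2 * Mc * t))).le
    calc V i t = Real.exp (-(2 * Mc * t)) * (Real.exp (2 * Mc * t) * V i t) := by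
          rw [← mul_assoc, ← Real.exp_add]; simp
      _ ≤ Real.exp (-(2 * Mc * t)) * (Real.exp (2 * Mc * s) * V i s) := h2
      _ = Real.exp (2 * Mc * (s - t)) * V i s := by
          rw [← mul_assoc, ← Real.exp_add]
          have : -(2 * Mc * t) + 2 * Mc * s = 2 * Mc * (s - t) := by ring
          rw [this]
  -- jump inequality
  have hjump : ∀ i, V (i + 1) (S.T (i + 1)) ≤ Real.exp (Mc * μ) * V i (S.T (i + 1)) := by
    intro i
    set v := x i (S.T (i + 1)) with hv
    have hq : 0 ≤ v ⬝ᵥ (Q (S.σ i) -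
        Real.exp (-(Mc * μ)) • ((sys.K (S.σ i) (S.σ (i+1)))ᵀ * Q (S.σ (i+1)) *
          sys.K (S.σ i) (S.σ (i+1)))).mulVec v := by
      simpa using (hK (S.σ i) (S.σ (i + 1)) (S.hσ i)).posSemidef.dotProduct_mulVec_nonneg v
    rw [Matrix.sub_mulVec, dotProduct_sub, Matrix.smul_mulVec,
      dotProduct_smul, smul_eq_mul, quad_tmul] at hq
    have hVeq : V (i + 1) (S.T (i + 1)) =
        ((sys.K (S.σ i) (S.σ (i+1))).mulVec v) ⬝ᵥ
          (Q (S.σ (i+1))).mulVec ((sys.K (S.σ i) (S.σ (i+1))).mulVec v) := by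
      simp only [hVdef, hx2 i, hv]
    rw [hVeq]
    have hgoal : V i (S.T (i + 1)) = v ⬝ᵥ (Q (S.σ i)).mulVec v := rfl
    rw [hgoal]
    rw [← inv_mul_le_iff₀ (Real.exp_pos (Mc * μ)), ← Real.exp_neg]
    linarith
  -- induction on switching indices
  have hind : ∀ i, V i (S.T i) ≤ Real.exp (-(Mc * S.T i)) * V 0 0 := by
    intro i
    induction i with
    | zero => simp [S.hT0]
    | succ i ih =>
      have hdw := hdwell i
      calc V (i + 1) (S.T (i + 1)) ≤ Real.exp (Mc * μ) * V i (S.T (i + 1)) := hjump i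
        _ ≤ Real.exp (Mc * μ) * (Real.exp (2 * Mc * (S.T i - S.T (i + 1))) * V i (S.T i)) := by
            apply mul_le_mul_of_nonneg_left _ (Real.exp_pos _).le
            exact hdecay i (S.T i) ⟨le_refl _, hTle i⟩ (S.T (i + 1)) ⟨hTle i, le_refl _⟩ (hTle i)
        _ ≤ Real.exp (Mc * μ) * (Real.exp (2 * Mc * (S.T i - S.T (i + 1))) *
              (Real.exp (-(Mc * S.T i)) * V 0 0)) := by
            apply mul_le_mul_of_nonneg_left _ (Real.exp_pos _).le
            exact mul_le_mul_of_nonneg_left ih (Real.exp_pos _).le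
        _ = Real.exp (Mc * μ + 2 * Mc * (S.T i - S.T (i + 1)) + -(Mc * S.T i)) * V 0 0 := by
            rw [Real.exp_add, Real.exp_add]; ring
        _ ≤ Real.exp (-(Mc * S.T (i + 1))) * V 0 0 := by
            apply mul_le_mul_of_nonneg_right _ (hVnonneg 0 0)
            apply Real.exp_le_exp.2
            nlinarith [mul_nonneg hMc.le (sub_nonneg.2 hdw)]
  -- pointwise bound
  have hmain : ∀ i, ∀ t ∈ Set.Ioc (S.T i) (S.T (i + 1)),
      V i t ≤ Real.exp (-(Mc * t)) * V 0 0 := by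
    intro i t ht
    have htIcc : t ∈ Set.Icc (S.T i) (S.T (i + 1)) := ⟨ht.1.le, ht.2⟩
    calc V i t ≤ Real.exp (2 * Mc * (S.T i - t)) * V i (S.T i) :=
          hdecay i (S.T i) ⟨le_refl _, hTle i⟩ t htIcc ht.1.le
      _ ≤ Real.exp (2 * Mc * (S.T i - t)) * (Real.exp (-(Mc * S.T i)) * V 0 0) :=
          mul_le_mul_of_nonneg_left (hind i) (Real.exp_pos _).le
      _ = Real.exp (2 * Mc * (S.T i - t) + -(Mc * S.T i)) * V 0 0 := by
          rw [Real.exp_add]; ring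
      _ ≤ Real.exp (-(Mc * t)) * V 0 0 := by
          apply mul_le_mul_of_nonneg_right _ (hVnonneg 0 0)
          apply Real.exp_le_exp.2
          nlinarith [mul_nonneg hMc.le (sub_nonneg.2 ht.1.le)]
  -- norm comparisons
  have hlow' : ∀ i t, ε ^ 2 * V i t ≤ ∑ j, (x i t j) ^ 2 := by
    intro i t
    have h0 : 0 ≤ x i t ⬝ᵥ ((1 : Matrix (Fin (sys.n (S.σ i))) (Fin (sys.n (S.σ i))) ℝ)
        - ε ^ 2 • Q (S.σ i)).mulVec (x i t) := by
      simpa using (hlow (S.σ i)).dotProduct_mulVec_nonneg (x i t)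
    rw [Matrix.sub_mulVec, dotProduct_sub, Matrix.one_mulVec,
      Matrix.smul_mulVec, dotProduct_smul, smul_eq_mul] at h0
    have hvv : x i t ⬝ᵥ x i t = ∑ j, (x i t j) ^ 2 := by simp [dotProduct, sq]
    simp only [hVdef]
    linarith
  have hhigh' : ∀ i t, ∑ j, (x i t j) ^ 2 ≤ φ ^ 2 * V i t := by
    intro i t
    have h0 : 0 ≤ x i t ⬝ᵥ (φ ^ 2 • Q (S.σ i)
        - (1 : Matrix (Fin (sys.n (S.σ i))) (Fin (sys.n (S.σ i))) ℝ)).mulVec (x i t) := by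
      simpa using (hhigh (S.σ i)).dotProduct_mulVec_nonneg (x i t)
    rw [Matrix.sub_mulVec, dotProduct_sub, Matrix.one_mulVec,
      Matrix.smul_mulVec, dotProduct_smul, smul_eq_mul] at h0
    have hvv : x i t ⬝ᵥ x i t = ∑ j, (x i t j) ^ 2 := by simp [dotProduct, sq]
    simp only [hVdef]
    linarith
  have s00nonneg : (0:ℝ) ≤ ∑ j, (x 0 0 j) ^ 2 := by positivity
  -- final assembly
  have hfinal : ∀ i t, V i t ≤ Real.exp (-(Mc * t)) * V 0 0 →
      Real.sqrt (∑ j, (x i t j) ^ 2) ≤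
        (φ / ε) * Real.exp (Mc * μ / 2) * Real.exp (-(Mc * t) / 2) *
          Real.sqrt (∑ j, (x 0 0 j) ^ 2) := by
    intro i t hVt
    apply sqrt_bound _ _ _ (by positivity)
    have hc2 : ((φ / ε) * Real.exp (Mc * μ / 2) * Real.exp (-(Mc * t) / 2)) ^ 2
        = (φ / ε) ^ 2 * (Real.exp (Mc * μ) * Real.exp (-(Mc * t))) := by
      rw [mul_pow, mul_pow, sq (Real.exp (Mc * μ / 2)), ← Real.exp_add,
        sq (Real.exp (-(Mc * t) / 2)), ← Real.exp_add]
      have e1 : Mc * μ / 2 + Mc * μ / 2 = Mc * μ := by ring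
      have e2 : -(Mc * t) / 2 + -(Mc * t) / 2 = -(Mc * t) := by ring
      rw [e1, e2]; ring
    rw [hc2]
    have step1 : (∑ j, (x i t j) ^ 2) ≤ φ ^ 2 * (Real.exp (-(Mc * t)) * V 0 0) :=
      le_trans (hhigh' i t) (mul_le_mul_of_nonneg_left hVt (sq_nonneg φ))
    have hV00 : V 0 0 ≤ (1 / ε ^ 2) * ∑ j, (x 0 0 j) ^ 2 := by
      have h := hlow' 0 0
      rw [one_div, ← div_eq_inv_mul, le_div_iff₀ (by positivity : (0:ℝ) < ε ^ 2)]
      linarith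
    have h1e : (1:ℝ) ≤ Real.exp (Mc * μ) := Real.one_le_exp (by positivity)
    calc (∑ j, (x i t j) ^ 2) ≤ φ ^ 2 * (Real.exp (-(Mc * t)) * V 0 0) := step1
      _ ≤ φ ^ 2 * (Real.exp (-(Mc * t)) * ((1 / ε ^ 2) * ∑ j, (x 0 0 j) ^ 2)) := by
          apply mul_le_mul_of_nonneg_left _ (sq_nonneg φ)
          exact mul_le_mul_of_nonneg_left hV00 (Real.exp_pos _).le
      _ = (φ / ε) ^ 2 * (1 * Real.exp (-(Mc * t))) * ∑ j, (x 0 0 j) ^ 2 := by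
          field_simp
      _ ≤ (φ / ε) ^ 2 * (Real.exp (Mc * μ) * Real.exp (-(Mc * t))) * ∑ j, (x 0 0 j) ^ 2 := by
          apply mul_le_mul_of_nonneg_right _ s00nonneg
          apply mul_le_mul_of_nonneg_left _ (sq_nonneg _)
          exact mul_le_mul_of_nonneg_right h1e (Real.exp_pos _).le
  constructor
  · apply hfinal 0 0
    simp
  · intro i t ht
    exact hfinal i t (hmain i t ht)
end

section
/- Consider an LSS with D modes. Suppose there exist symmetric positive definite matrices Q_q ∈ ℝ^{n_q×n_q} and constants M, μ > 0 such that A_qᵀ Q_q + Q_q A_q + M Q_q ≺ 0 for all modes q, and e^{−Mμ} K_{q1,q2}ᵀ Q_{q2} K_{q1,q2} ≺ Q_{q1} for all q1 ≠ q2 (≺ in the Loewner order). Then the LSS is uniformly exponentially stable with dwell time 2μ. -/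
open Matrix MeasureTheory

lemma quad_bounds {n : ℕ} {Q : Matrix (Fin n) (Fin n) ℝ} (hQ : Q.PosDef) :
    ∃ a b : ℝ, 0 < a ∧ 0 < b ∧ ∀ x : Fin n → ℝ,
      a * (x ⬝ᵥ x) ≤ x ⬝ᵥ Q *ᵥ x ∧ x ⬝ᵥ Q *ᵥ x ≤ b * (x ⬝ᵥ x) := by
  rcases Nat.eq_zero_or_pos n with hn | hn
  · subst hn
    exact ⟨1, 1, one_pos, one_pos, fun x => by simp [dotProduct]⟩
  · have hne : Nonempty (Fin n) := ⟨⟨0, hn⟩⟩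
    set hH := hQ.1
    set lam := hH.eigenvalues with hlam
    set U : Matrix (Fin n) (Fin n) ℝ := (hH.eigenvectorUnitary : Matrix (Fin n) (Fin n) ℝ)
      with hU
    have hUstar : star U = Uᵀ := by simp [star]
    have hUU : U * Uᵀ = 1 := by
      rw [← hUstar]; exact mem_unitaryGroup_iff.mp hH.eigenvectorUnitary.2
    have hspec : Q = U * diagonal lam * Uᵀ := by
      rw [← hUstar]
      simpa using hH.spectral_theorem
    set a := Finset.univ.inf' (Finset.univ_nonempty) lam with ha
    set b := Finset.univ.sup' (Finset.univ_nonempty) lam with hb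
    have hal : ∀ i, a ≤ lam i := fun i => Finset.inf'_le _ (Finset.mem_univ i)
    have hbl : ∀ i, lam i ≤ b := fun i => Finset.le_sup' _ (Finset.mem_univ i)
    have hapos : 0 < a := by
      rw [ha, Finset.lt_inf'_iff]
      exact fun i _ => hQ.eigenvalues_pos i
    refine ⟨a, b, hapos, hapos.trans_le ((hal _).trans (hbl (Classical.arbitrary _))), fun x => ?_⟩
    set y := Uᵀ *ᵥ x with hy
    have hyy : x ⬝ᵥ x = ∑ i, (y i) ^ 2 := by
      have h1 : y ⬝ᵥ y = x ⬝ᵥ x := by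
        rw [hy, mulVec_transpose, ← dotProduct_mulVec, ← mulVec_transpose, mulVec_mulVec,
          hUU, one_mulVec]
      rw [← h1]; simp [dotProduct, sq]
    have hQx : x ⬝ᵥ Q *ᵥ x = ∑ i, lam i * (y i) ^ 2 := by
      rw [hspec, ← mulVec_mulVec, ← mulVec_mulVec, dotProduct_mulVec, ← mulVec_transpose, ← hy,
        dotProduct_mulVec, ← mulVec_transpose, diagonal_transpose]
      simp only [dotProduct, mulVec_diagonal]
      exact Finset.sum_congr rfl fun i _ => by ring
    constructor
    · rw [hQx, hyy, Finset.mul_sum]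
      exact Finset.sum_le_sum fun i _ => mul_le_mul_of_nonneg_right (hal i) (sq_nonneg _)
    · rw [hQx, hyy, Finset.mul_sum]
      exact Finset.sum_le_sum fun i _ => mul_le_mul_of_nonneg_right (hbl i) (sq_nonneg _)

lemma hasDerivAt_quadform {n : ℕ} (Q : Matrix (Fin n) (Fin n) ℝ) {f : ℝ → Fin n → ℝ}
    {d : Fin n → ℝ} {s : ℝ} (hf : HasDerivAt f d s) :
    HasDerivAt (fun t => f t ⬝ᵥ Q *ᵥ f t) (d ⬝ᵥ Q *ᵥ f s + f s ⬝ᵥ Q *ᵥ d) s := by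
  have hc : ∀ j, HasDerivAt (fun t => f t j) (d j) s := fun j => hasDerivAt_pi.mp hf j
  have h : ∀ j k, HasDerivAt (fun t => f t j * (Q j k * f t k))
      (d j * (Q j k * f s k) + f s j * (Q j k * d k)) s := by
    intro j k
    exact ((hc j).mul ((hc k).const_mul (Q j k)))
  have hsum : HasDerivAt (fun t => ∑ j, ∑ k, f t j * (Q j k * f t k))
      (∑ j, ∑ k, (d j * (Q j k * f s k) + f s j * (Q j k * d k))) s := by
    apply HasDerivAt.fun_sum
    intro j _
    exact HasDerivAt.fun_sum fun k _ => h j k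
  convert hsum using 1
  · ext t
    simp [dotProduct, mulVec, Finset.mul_sum]
  · simp only [Finset.sum_add_distrib]
    congr 1 <;> simp [dotProduct, mulVec, Finset.mul_sum]

lemma exp_decay {a b : ℝ} {M : ℝ} {V V' : ℝ → ℝ}
    (hV : ∀ s ∈ Set.Icc a b, HasDerivAt V (V' s) s)
    (hV' : ∀ s ∈ Set.Icc a b, V' s ≤ -M * V s) :
    ∀ t ∈ Set.Icc a b, V t ≤ Real.exp (-(M * (t - a))) * V a := by
  intro t ht
  set g : ℝ → ℝ := fun t => Real.exp (M * t) * V t with hg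
  have hgd : ∀ s ∈ Set.Icc a b, HasDerivAt g
      (M * Real.exp (M * s) * V s + Real.exp (M * s) * V' s) s := by
    intro s hs
    have he : HasDerivAt (fun t => Real.exp (M * t)) (M * Real.exp (M * s)) s := by
      simpa [mul_comm, Function.comp_def] using (Real.hasDerivAt_exp (M * s)).comp s ((hasDerivAt_id s).const_mul M)
    exact he.mul (hV s hs)
  have hanti : AntitoneOn g (Set.Icc a b) := by
    apply antitoneOn_of_deriv_nonpos (convex_Icc a b)
    · exact fun s hs => ((hgd s hs).continuousAt).continuousWithinAt
    · intro s hs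
      rw [interior_Icc] at hs
      exact ((hgd s (Set.Ioo_subset_Icc_self hs)).differentiableAt).differentiableWithinAt
    · intro s hs
      rw [interior_Icc] at hs
      have hs' := Set.Ioo_subset_Icc_self hs
      rw [(hgd s hs').deriv]
      have := hV' s hs'
      nlinarith [Real.exp_pos (M * s)]
  have hab : a ∈ Set.Icc a b := ⟨le_refl a, ht.1.trans ht.2⟩
  have := hanti hab ht ht.1
  rw [hg] at this
  have h2 : Real.exp (M * t) * V t ≤ Real.exp (M * a) * V a := this
  have h3 : V t ≤ Real.exp (M * a) * V a / Real.exp (M * t) := by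
    rw [le_div_iff₀ (Real.exp_pos _)]
    linarith [h2]
  calc V t ≤ Real.exp (M * a) * V a / Real.exp (M * t) := h3
    _ = Real.exp (-(M * (t - a))) * V a := by
        rw [div_eq_iff (Real.exp_pos _).ne', mul_assoc, mul_comm (V a), ← mul_assoc,
          ← Real.exp_add]
        ring_nf

lemma dot_KQK {n m' : ℕ} (K : Matrix (Fin m') (Fin n) ℝ) (P : Matrix (Fin m') (Fin m') ℝ)
    (v : Fin n → ℝ) : v ⬝ᵥ (Kᵀ * P * K) *ᵥ v = (K *ᵥ v) ⬝ᵥ P *ᵥ (K *ᵥ v) := by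
  rw [← mulVec_mulVec, ← mulVec_mulVec, dotProduct_mulVec, vecMul_transpose, mulVec_mulVec]

lemma lyap_ineq {n : ℕ} {A Q : Matrix (Fin n) (Fin n) ℝ} {Mc : ℝ}
    (h : (-(Aᵀ * Q + Q * A + Mc • Q)).PosDef) (v : Fin n → ℝ) :
    (A *ᵥ v) ⬝ᵥ Q *ᵥ v + v ⬝ᵥ Q *ᵥ (A *ᵥ v) ≤ -Mc * (v ⬝ᵥ Q *ᵥ v) := by
  have h0 := h.posSemidef.dotProduct_mulVec_nonneg v
  rw [star_trivial] at h0
  have e1 : v ⬝ᵥ (Aᵀ * Q) *ᵥ v = (A *ᵥ v) ⬝ᵥ Q *ᵥ v := by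
    rw [← mulVec_mulVec, dotProduct_mulVec, vecMul_transpose]
  have e2 : v ⬝ᵥ (Q * A) *ᵥ v = v ⬝ᵥ Q *ᵥ (A *ᵥ v) := by rw [← mulVec_mulVec]
  rw [neg_mulVec, dotProduct_neg, add_mulVec, add_mulVec, dotProduct_add, dotProduct_add,
    smul_mulVec, dotProduct_smul, e1, e2] at h0
  simp only [smul_eq_mul] at h0
  linarith

lemma jump_ineq {n n' : ℕ} {K : Matrix (Fin n') (Fin n) ℝ} {Q1 : Matrix (Fin n) (Fin n) ℝ}
    {Q2 : Matrix (Fin n') (Fin n') ℝ} {c : ℝ}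
    (h : (Q1 - Real.exp (-c) • (Kᵀ * Q2 * K)).PosDef) (v : Fin n → ℝ) :
    (K *ᵥ v) ⬝ᵥ Q2 *ᵥ (K *ᵥ v) ≤ Real.exp c * (v ⬝ᵥ Q1 *ᵥ v) := by
  have h0 := h.posSemidef.dotProduct_mulVec_nonneg v
  rw [star_trivial] at h0
  rw [sub_mulVec, dotProduct_sub, smul_mulVec, dotProduct_smul, dot_KQK] at h0
  simp only [smul_eq_mul] at h0
  have he : Real.exp c * Real.exp (-c) = 1 := by rw [← Real.exp_add]; simp
  have h0' : Real.exp (-c) * ((K *ᵥ v) ⬝ᵥ Q2 *ᵥ (K *ᵥ v)) ≤ v ⬝ᵥ Q1 *ᵥ v := by linarith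
  calc (K *ᵥ v) ⬝ᵥ Q2 *ᵥ (K *ᵥ v)
      = Real.exp c * (Real.exp (-c) * ((K *ᵥ v) ⬝ᵥ Q2 *ᵥ (K *ᵥ v))) := by
        rw [← mul_assoc, he, one_mul]
    _ ≤ Real.exp c * (v ⬝ᵥ Q1 *ᵥ v) := mul_le_mul_of_nonneg_left h0' (Real.exp_pos c).le
/-- Corollary 1: if positive definite `Q_q` satisfy
`A_qᵀ Q_q + Q_q A_q + M Q_q ≺ 0` and `e^{−Mμ} K_{q1,q2}ᵀ Q_{q2} K_{q1,q2} ≺ Q_{q1}` for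
all `q1 ≠ q2`, then the LSS is uniformly exponentially stable with dwell time `2μ`. -/
theorem stmt_11 {D m p : ℕ} (sys : LSS D m p)
    (Q : (q : Fin D) → Matrix (Fin (sys.n q)) (Fin (sys.n q)) ℝ)
    (hQ : ∀ q, (Q q).PosDef)
    (Mc μ : ℝ) (hMc : 0 < Mc) (hμ : 0 < μ)
    (hLyap : ∀ q, (-((sys.A q)ᵀ * Q q + Q q * sys.A q + Mc • Q q)).PosDef)
    (hK : ∀ q1 q2, q1 ≠ q2 →
      (Q q1 - Real.exp (-(Mc * μ)) • ((sys.K q1 q2)ᵀ * Q q2 * sys.K q1 q2)).PosDef) :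
    UnifExpStable sys (2 * μ) := by
  classical
  rcases Nat.eq_zero_or_pos D with hD | hD
  · subst hD
    exact ⟨1, one_pos, 1, one_pos, fun S _ _ _ => (S.σ 0).elim0⟩
  have hne : Nonempty (Fin D) := ⟨⟨0, hD⟩⟩
  choose a b hapos hbpos hbound using fun q => quad_bounds (hQ q)
  set amin := Finset.univ.inf' Finset.univ_nonempty a with hamin_def
  set bmax := Finset.univ.sup' Finset.univ_nonempty b with hbmax_def
  have hamin : 0 < amin := by
    rw [hamin_def, Finset.lt_inf'_iff]; exact fun q _ => hapos q
  have hamin_le : ∀ q, amin ≤ a q := fun q => Finset.inf'_le _ (Finset.mem_univ q)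
  have hbmax_le : ∀ q, b q ≤ bmax := fun q => Finset.le_sup' _ (Finset.mem_univ q)
  have hbmax : 0 < bmax := lt_of_lt_of_le (hbpos (Classical.arbitrary _)) (hbmax_le _)
  set c := bmax / amin with hc
  have hcpos : 0 < c := div_pos hbmax hamin
  set Kc := max 1 (Real.sqrt c) with hKcdef
  have hKc1 : (1:ℝ) ≤ Kc := le_max_left _ _
  refine ⟨Kc, lt_of_lt_of_le one_pos hKc1, Mc/4, by positivity, ?_⟩
  intro S hdwell x hx
  obtain ⟨hode, hjump⟩ := hx
  have hds : ∀ {k : ℕ} (v : Fin k → ℝ), ∑ j, (v j)^2 = v ⬝ᵥ v := by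
    intro k v; simp [dotProduct, sq]
  have hdsnn : ∀ {k : ℕ} (v : Fin k → ℝ), 0 ≤ v ⬝ᵥ v := fun v =>
    Finset.sum_nonneg fun j _ => mul_self_nonneg _
  have hT0 := S.hT0
  have hTle : ∀ i, S.T i ≤ S.T (i+1) := fun i => (S.hTmono (Nat.lt_succ_self i)).le
  have hTnn : ∀ i, 0 ≤ S.T i := fun i => hT0 ▸ S.hTmono.monotone (Nat.zero_le i)
  have hVnn : ∀ (i : ℕ) (t : ℝ), 0 ≤ (x i t) ⬝ᵥ Q (S.σ i) *ᵥ (x i t) := fun i t => by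
    simpa using (hQ (S.σ i)).posSemidef.dotProduct_mulVec_nonneg (x i t)
  have hder : ∀ (i : ℕ), ∀ s ∈ Set.Icc (S.T i) (S.T (i+1)),
      HasDerivAt (fun t => (x i t) ⬝ᵥ Q (S.σ i) *ᵥ (x i t))
        ((sys.A (S.σ i) *ᵥ x i s) ⬝ᵥ Q (S.σ i) *ᵥ x i s
          + x i s ⬝ᵥ Q (S.σ i) *ᵥ (sys.A (S.σ i) *ᵥ x i s)) s := by
    intro i s hs
    have hd : HasDerivAt (x i) (sys.A (S.σ i) *ᵥ x i s) s := by
      have h0 : (sys.B (S.σ i)) *ᵥ (fun _ => (0:ℝ)) = 0 := Matrix.mulVec_zero _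
      have := hode i s hs
      rw [h0, add_zero] at this
      exact this
    exact hasDerivAt_quadform (Q (S.σ i)) hd
  have hdecay : ∀ (i : ℕ), ∀ t ∈ Set.Icc (S.T i) (S.T (i+1)),
      (x i t) ⬝ᵥ Q (S.σ i) *ᵥ (x i t) ≤
        Real.exp (-(Mc * (t - S.T i))) * ((x i (S.T i)) ⬝ᵥ Q (S.σ i) *ᵥ (x i (S.T i))) := by
    intro i
    exact exp_decay (V := fun t => (x i t) ⬝ᵥ Q (S.σ i) *ᵥ (x i t))
      (V' := fun s => (sys.A (S.σ i) *ᵥ x i s) ⬝ᵥ Q (S.σ i) *ᵥ x i s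
          + x i s ⬝ᵥ Q (S.σ i) *ᵥ (sys.A (S.σ i) *ᵥ x i s))
      (hder i) (fun s _ => lyap_ineq (hLyap (S.σ i)) (x i s))
  have hjumpV : ∀ i : ℕ,
      (x (i+1) (S.T (i+1))) ⬝ᵥ Q (S.σ (i+1)) *ᵥ (x (i+1) (S.T (i+1)))
        ≤ Real.exp (Mc * μ) * ((x i (S.T (i+1))) ⬝ᵥ Q (S.σ i) *ᵥ (x i (S.T (i+1)))) := by
    intro i
    rw [hjump i]
    exact jump_ineq (hK (S.σ i) (S.σ (i+1)) (S.hσ i)) (x i (S.T (i+1)))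
  have hV0 : (0:ℝ) ≤ (x 0 0) ⬝ᵥ Q (S.σ 0) *ᵥ (x 0 0) := hVnn 0 0
  have hstep : ∀ i : ℕ, (x i (S.T i)) ⬝ᵥ Q (S.σ i) *ᵥ (x i (S.T i))
      ≤ Real.exp (-(Mc/2 * S.T i)) * ((x 0 0) ⬝ᵥ Q (S.σ 0) *ᵥ (x 0 0)) := by
    intro i
    induction i with
    | zero => rw [hT0]; simp
    | succ i ih =>
      have h1 := hjumpV i
      have h2 := hdecay i (S.T (i+1)) ⟨hTle i, le_refl _⟩
      have h3 := hdwell i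
      have hexp : Real.exp (Mc * μ) * (Real.exp (-(Mc * (S.T (i+1) - S.T i)))
          * Real.exp (-(Mc/2 * S.T i))) ≤ Real.exp (-(Mc/2 * S.T (i+1))) := by
        rw [← Real.exp_add, ← Real.exp_add]
        apply Real.exp_le_exp.mpr
        nlinarith
      calc (x (i+1) (S.T (i+1))) ⬝ᵥ Q (S.σ (i+1)) *ᵥ (x (i+1) (S.T (i+1)))
          ≤ Real.exp (Mc * μ) *
              ((x i (S.T (i+1))) ⬝ᵥ Q (S.σ i) *ᵥ (x i (S.T (i+1)))) := h1
        _ ≤ Real.exp (Mc * μ) * (Real.exp (-(Mc * (S.T (i+1) - S.T i)))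
              * ((x i (S.T i)) ⬝ᵥ Q (S.σ i) *ᵥ (x i (S.T i)))) :=
            mul_le_mul_of_nonneg_left h2 (Real.exp_pos _).le
        _ ≤ Real.exp (Mc * μ) * (Real.exp (-(Mc * (S.T (i+1) - S.T i)))
              * (Real.exp (-(Mc/2 * S.T i)) * ((x 0 0) ⬝ᵥ Q (S.σ 0) *ᵥ (x 0 0)))) := by
            apply mul_le_mul_of_nonneg_left _ (Real.exp_pos _).le
            exact mul_le_mul_of_nonneg_left ih (Real.exp_pos _).le
        _ = (Real.exp (Mc * μ) * (Real.exp (-(Mc * (S.T (i+1) - S.T i)))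
              * Real.exp (-(Mc/2 * S.T i)))) * ((x 0 0) ⬝ᵥ Q (S.σ 0) *ᵥ (x 0 0)) := by ring
        _ ≤ Real.exp (-(Mc/2 * S.T (i+1))) * ((x 0 0) ⬝ᵥ Q (S.σ 0) *ᵥ (x 0 0)) :=
            mul_le_mul_of_nonneg_right hexp hV0
  constructor
  · have h0 := Real.sqrt_nonneg (∑ j, (x 0 0 j)^2)
    have : Real.exp (-(Mc/4 * 0)) = 1 := by norm_num
    rw [this]
    nlinarith
  · intro i t ht
    have htIcc : t ∈ Set.Icc (S.T i) (S.T (i+1)) := ⟨ht.1.le, ht.2⟩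
    have hti : S.T i ≤ t := ht.1.le
    have hVt : (x i t) ⬝ᵥ Q (S.σ i) *ᵥ (x i t)
        ≤ Real.exp (-(Mc/2 * t)) * ((x 0 0) ⬝ᵥ Q (S.σ 0) *ᵥ (x 0 0)) := by
      have hexp : Real.exp (-(Mc * (t - S.T i))) * Real.exp (-(Mc/2 * S.T i))
          ≤ Real.exp (-(Mc/2 * t)) := by
        rw [← Real.exp_add]
        apply Real.exp_le_exp.mpr
        nlinarith
      calc (x i t) ⬝ᵥ Q (S.σ i) *ᵥ (x i t)
          ≤ Real.exp (-(Mc * (t - S.T i))) *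
              ((x i (S.T i)) ⬝ᵥ Q (S.σ i) *ᵥ (x i (S.T i))) := hdecay i t htIcc
        _ ≤ Real.exp (-(Mc * (t - S.T i))) * (Real.exp (-(Mc/2 * S.T i))
              * ((x 0 0) ⬝ᵥ Q (S.σ 0) *ᵥ (x 0 0))) :=
            mul_le_mul_of_nonneg_left (hstep i) (Real.exp_pos _).le
        _ = (Real.exp (-(Mc * (t - S.T i))) * Real.exp (-(Mc/2 * S.T i)))
              * ((x 0 0) ⬝ᵥ Q (S.σ 0) *ᵥ (x 0 0)) := by ring
        _ ≤ Real.exp (-(Mc/2 * t)) * ((x 0 0) ⬝ᵥ Q (S.σ 0) *ᵥ (x 0 0)) :=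
            mul_le_mul_of_nonneg_right hexp hV0
    have hXa : amin * ((x i t) ⬝ᵥ (x i t)) ≤ (x i t) ⬝ᵥ Q (S.σ i) *ᵥ (x i t) :=
      le_trans (mul_le_mul_of_nonneg_right (hamin_le _) (hdsnn _)) (hbound (S.σ i) (x i t)).1
    have hX0 : (x 0 0) ⬝ᵥ Q (S.σ 0) *ᵥ (x 0 0) ≤ bmax * ((x 0 0) ⬝ᵥ (x 0 0)) :=
      le_trans (hbound (S.σ 0) (x 0 0)).2 (mul_le_mul_of_nonneg_right (hbmax_le _) (hdsnn _))
    have hchain : amin * ((x i t) ⬝ᵥ (x i t))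
        ≤ Real.exp (-(Mc/2 * t)) * (bmax * ((x 0 0) ⬝ᵥ (x 0 0))) :=
      le_trans (le_trans hXa hVt) (mul_le_mul_of_nonneg_left hX0 (Real.exp_pos _).le)
    have hXle : (x i t) ⬝ᵥ (x i t)
        ≤ (Real.sqrt c * Real.exp (-(Mc/4 * t)))^2 * ((x 0 0) ⬝ᵥ (x 0 0)) := by
      have hsq : (Real.sqrt c * Real.exp (-(Mc/4 * t)))^2
          = c * Real.exp (-(Mc/2 * t)) := by
        rw [mul_pow, Real.sq_sqrt hcpos.le, sq, ← Real.exp_add]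
        ring_nf
      rw [hsq, hc, div_mul_eq_mul_div, div_mul_eq_mul_div, le_div_iff₀ hamin]
      nlinarith
    rw [hds (x i t), hds (x 0 0)]
    calc Real.sqrt ((x i t) ⬝ᵥ (x i t))
        ≤ Real.sqrt ((Real.sqrt c * Real.exp (-(Mc/4 * t)))^2 * ((x 0 0) ⬝ᵥ (x 0 0))) :=
          Real.sqrt_le_sqrt hXle
      _ = (Real.sqrt c * Real.exp (-(Mc/4 * t))) * Real.sqrt ((x 0 0) ⬝ᵥ (x 0 0)) := by
          rw [Real.sqrt_mul (sq_nonneg _), Real.sqrt_sq (by positivity)]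
      _ ≤ Kc * Real.exp (-(Mc/4 * t)) * Real.sqrt ((x 0 0) ⬝ᵥ (x 0 0)) := by
          apply mul_le_mul_of_nonneg_right _ (Real.sqrt_nonneg _)
          exact mul_le_mul_of_nonneg_right (le_max_right _ _) (Real.exp_pos _).le
end
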